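/- arXiv:1808.01245 — 3 statements merged into one kernel-verified Lean document; each statement's English description precedes it below -/
import Mathlib

section
/- The 1-form φ(z) = K(z,z)^{1/(n+1)} dzₙ, restricted to C̃₀, is γ₀-invariant: for every z ∈ C̃₀, K(γ₀z, γ₀z)^{1/(n+1)} multiplied by the derivative of the n-th coordinate of γ₀z with respect to the real parameter xₙ = zₙ equals K(z,z)^{1/(n+1)}. -/
open scoped BigOperators
open Complex MeasureTheory Filter Topology Matrix

namespace BallPaper

noncomputable section

variable {n : ℕ}

/-- The unit ball in ℂⁿ. -/
def ball (n : ℕ) : Set (Fin n → ℂ) := {z | ∑ i, ‖z i‖ ^ 2 < 1}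

/-- ⟨z,w⟩ = z₁ conj w₁ + ... + zₙ conj wₙ − 1. -/
def pair (z w : Fin n → ℂ) : ℂ := ∑ i, z i * star (w i) - 1

/-- The Hermitian form of signature (n,1) on ℂ^{n+1}:
⟨⟨u,v⟩⟩ = u₁ conj v₁ + ... + uₙ conj vₙ − u_{n+1} conj v_{n+1}. -/
def herm (u v : Fin (n + 1) → ℂ) : ℂ :=
  ∑ i : Fin n, u i.castSucc * star (v i.castSucc) - u (Fin.last n) * star (v (Fin.last n))

/-- SU(n,1): determinant-one matrices preserving the (n,1) Hermitian form. -/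
def SU (n : ℕ) : Set (Matrix (Fin (n + 1)) (Fin (n + 1)) ℂ) :=
  {A | A.det = 1 ∧ ∀ u v, herm (A.mulVec u) (A.mulVec v) = herm u v}

/-- The denominator a_{n+1,1} z₁ + ... + a_{n+1,n} zₙ + a_{n+1,n+1} of the
fractional-linear action. -/
def denom (A : Matrix (Fin (n + 1)) (Fin (n + 1)) ℂ) (z : Fin n → ℂ) : ℂ :=
  ∑ j : Fin n, A (Fin.last n) j.castSucc * z j + A (Fin.last n) (Fin.last n)

/-- The fractional-linear action of a matrix on ℂⁿ (defined on the ball). -/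
def act (A : Matrix (Fin (n + 1)) (Fin (n + 1)) ℂ) (z : Fin n → ℂ) : Fin n → ℂ :=
  fun j => (∑ l : Fin n, A j.castSucc l.castSucc * z l + A j.castSucc (Fin.last n)) / denom A z

/-- The complex Jacobian J(A,z) = (denominator)^{-(n+1)}. -/
def jac (A : Matrix (Fin (n + 1)) (Fin (n + 1)) ℂ) (z : Fin n → ℂ) : ℂ :=
  (denom A z)⁻¹ ^ (n + 1)

/-- The Bergman kernel K(z,w) = (n!/πⁿ) (−⟨z,w⟩)^{−(n+1)}. -/
def Kc (z w : Fin n → ℂ) : ℂ :=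
  (((Nat.factorial n : ℝ) / Real.pi ^ n : ℝ) : ℂ) * (-(pair z w))⁻¹ ^ (n + 1)

/-- K(z,z) as a real-valued function: K(z,z) = (n!/πⁿ) (1−|z|²)^{−(n+1)}. -/
def Kr (z : Fin n → ℂ) : ℝ :=
  (Nat.factorial n : ℝ) / Real.pi ^ n * ((1 - ∑ i, ‖z i‖ ^ 2)⁻¹) ^ (n + 1)

/-- c(𝔹ⁿ,k) = C((n+1)(k−1)+n, n). -/
def cB (n k : ℕ) : ℕ := Nat.choose ((n + 1) * (k - 1) + n) n

/-- The last index of Fin n. -/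
def lastI (n : ℕ) (hn : 0 < n) : Fin n := ⟨n - 1, by omega⟩

/-- The geodesic C̃₀ = {z ∈ 𝔹ⁿ : z₁ = ... = z_{n−1} = 0, zₙ ∈ (−1,1) real}. -/
def geo0 (n : ℕ) (hn : 0 < n) : Set (Fin n → ℂ) :=
  {z | (∀ i : Fin n, (i : ℕ) < n - 1 → z i = 0) ∧ (z (lastI n hn)).im = 0 ∧
    -1 < (z (lastI n hn)).re ∧ (z (lastI n hn)).re < 1}

/-- The point (0,...,0,x) of C̃₀. -/
def curve (n : ℕ) (hn : 0 < n) (x : ℝ) : Fin n → ℂ :=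
  fun i => if i = lastI n hn then (x : ℂ) else 0

/-- The vector (X,1) ∈ ℂ^{n+1}. -/
def snoc1 (X : Fin n → ℂ) : Fin (n + 1) → ℂ := Fin.snoc X 1

/-- The matrix A_γ, with columns v₁,...,v_{n−1},
⟨X,Y⟩⁻¹(X,1) + (1/2)(Y,1), ⟨X,Y⟩⁻¹(X,1) − (1/2)(Y,1). -/
def Amat (n : ℕ) (v : Fin (n - 1) → Fin (n + 1) → ℂ) (X Y : Fin n → ℂ) :
    Matrix (Fin (n + 1)) (Fin (n + 1)) ℂ :=
  Matrix.of fun i j =>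
    if h : (j : ℕ) < n - 1 then v ⟨j, h⟩ i
    else if (j : ℕ) = n - 1 then ((pair X Y)⁻¹ • snoc1 X + (2 : ℂ)⁻¹ • snoc1 Y) i
    else ((pair X Y)⁻¹ • snoc1 X - (2 : ℂ)⁻¹ • snoc1 Y) i

/-- σ = diag(1,...,1,−1). -/
def sigmaM (n : ℕ) : Matrix (Fin (n + 1)) (Fin (n + 1)) ℂ :=
  Matrix.diagonal fun i => if i = Fin.last n then -1 else 1

/-- Inverse hyperbolic cosine. -/
def arcosh (x : ℝ) : ℝ := Real.log (x + Real.sqrt (x ^ 2 - 1))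

/-- Inverse hyperbolic tangent. -/
def artanh (x : ℝ) : ℝ := Real.log ((1 + x) / (1 - x)) / 2

/-- The hyperbolic (Bergman) distance on the ball, determined by
cosh²(ρ(z,w)/2) = ⟨z,w⟩⟨w,z⟩/(⟨z,z⟩⟨w,w⟩). -/
def rho (z w : Fin n → ℂ) : ℝ :=
  2 * arcosh (Real.sqrt ((pair z w * pair w z).re / (pair z z * pair w w).re))

/-- A discrete subgroup Γ of SU(n,1) acting freely on the ball with compact quotient. -/
structure DiscreteGroup (n : ℕ) where
  Γ : Set (Matrix (Fin (n + 1)) (Fin (n + 1)) ℂ)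
  sub_SU : Γ ⊆ SU n
  one_mem : 1 ∈ Γ
  mul_mem : ∀ {A B}, A ∈ Γ → B ∈ Γ → A * B ∈ Γ
  inv_mem : ∀ {A}, A ∈ Γ → A⁻¹ ∈ Γ
  discrete : DiscreteTopology ↥Γ
  free : ∀ A ∈ Γ, (∃ z ∈ ball n, act A z = z) → A = 1
  cocompact : ∃ F : Set (Fin n → ℂ), F ⊆ ball n ∧ IsCompact F ∧
    ∀ z ∈ ball n, ∃ A ∈ Γ, act A z ∈ F

/-- A hyperbolic element γ of Γ, with real eigenvalues, real fixed points X, Y on the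
boundary, eigenvalue data λ, and the eigenvectors v₁,...,v_{n−1} for eigenvalues ±1,
orthonormal with respect to the form ⟨⟨.,.⟩⟩. -/
structure HypElt (n : ℕ) (G : DiscreteGroup n) where
  γ : Matrix (Fin (n + 1)) (Fin (n + 1)) ℂ
  mem : γ ∈ G.Γ
  ne_one : γ ≠ 1
  eig_real : ∀ μ ∈ spectrum ℂ γ, μ.im = 0
  X : Fin n → ℂ
  Y : Fin n → ℂ
  X_bd : ∑ i, ‖X i‖ ^ 2 = 1
  Y_bd : ∑ i, ‖Y i‖ ^ 2 = 1
  X_real : ∀ i, (X i).im = 0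
  Y_real : ∀ i, (Y i).im = 0
  lam : ℝ
  lam_sq : 1 < lam ^ 2
  eigX : γ.mulVec (snoc1 X) = (lam : ℂ) • snoc1 X
  eigY : γ.mulVec (snoc1 Y) = ((lam : ℂ))⁻¹ • snoc1 Y
  primitive : ∀ A ∈ G.Γ, ∀ m : ℕ, 2 ≤ m → A ^ m ≠ γ
  v : Fin (n - 1) → Fin (n + 1) → ℂ
  alph : Fin (n - 1) → ℂ
  alph_pm : ∀ j, alph j = 1 ∨ alph j = -1
  v_eig : ∀ j, γ.mulVec (v j) = alph j • v j
  v_on : ∀ j l, herm (v j) (v l) = if j = l then 1 else 0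

variable {G : DiscreteGroup n}

/-- The matrix A_γ associated to the hyperbolic element γ. -/
def HypElt.A (H : HypElt n G) : Matrix (Fin (n + 1)) (Fin (n + 1)) ℂ :=
  Amat n H.v H.X H.Y

/-- γ₀ = A_γ⁻¹ γ A_γ. -/
def HypElt.g0 (H : HypElt n G) : Matrix (Fin (n + 1)) (Fin (n + 1)) ℂ :=
  (H.A)⁻¹ * H.γ * H.A

/-- T = (λ²−1)/(λ²+1), the last coordinate of γ₀(0). -/
def HypElt.T (H : HypElt n G) : ℝ := (H.lam ^ 2 - 1) / (H.lam ^ 2 + 1)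

/-- The geodesic C̃ in 𝔹ⁿ with endpoints X, Y, as the image of C̃₀ under A_γ. -/
def HypElt.Ct (H : HypElt n G) (hn : 0 < n) : Set (Fin n → ℂ) :=
  act H.A '' geo0 n hn

/-- The length l(C) of the closed geodesic C, the hyperbolic distance from 0 to γ₀(0). -/
def HypElt.lenC (H : HypElt n G) : ℝ :=
  rho (0 : Fin n → ℂ) (act H.g0 (0 : Fin n → ℂ))

/-- A (measure-theoretic) fundamental domain for the action of Γ on the ball. -/
def IsFundDom (G : DiscreteGroup n) (F : Set (Fin n → ℂ)) : Prop :=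
  F ⊆ ball n ∧ MeasurableSet F ∧ (∀ z ∈ ball n, ∃ A ∈ G.Γ, act A z ∈ F) ∧
    ∀ A ∈ G.Γ, A ≠ 1 → volume {z ∈ F | act A z ∈ F} = 0

/-- The automorphy condition f(Az) J(A,z)^k = f(z). -/
def Automorphic (G : DiscreteGroup n) (k : ℕ) (f : (Fin n → ℂ) → ℂ) : Prop :=
  ∀ A ∈ G.Γ, ∀ z ∈ ball n, f (act A z) * jac A z ^ k = f z

/-- Membership in H̃⁰_Γ(k): holomorphic on the ball and automorphic of weight k. -/
def Htilde (G : DiscreteGroup n) (k : ℕ) (f : (Fin n → ℂ) → ℂ) : Prop :=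
  DifferentiableOn ℂ f (ball n) ∧ Automorphic G k f

/-- The inner product (f,g) = ∫_M f ḡ K(z,z)^{−k} dV = ∫_F f ḡ K(z,z)^{1−k} dV_e,
computed over a fundamental domain F. -/
def iprod (F : Set (Fin n → ℂ)) (k : ℕ) (f g : (Fin n → ℂ) → ℂ) : ℂ :=
  ∫ z in F, f z * star (g z) * ((Kr z ^ ((1 : ℤ) - (k : ℤ)) : ℝ) : ℂ)

/-- The Poincaré series Θ_w^{(k)}(z) = c(𝔹ⁿ,k) Σ_{A∈Γ} K(Az,w)^k J(A,z)^k. -/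
def ThetaPt (G : DiscreteGroup n) (k : ℕ) (w z : Fin n → ℂ) : ℂ :=
  (cB n k : ℂ) * ∑' A : ↥G.Γ, Kc (act (A : Matrix (Fin (n + 1)) (Fin (n + 1)) ℂ) z) w ^ k *
    jac (A : Matrix (Fin (n + 1)) (Fin (n + 1)) ℂ) z ^ k

/-- The relative Poincaré series
Θ_C^{(k)}(z) = ∫_C Θ_w^{(k)}(z) K(w,w)^{−k/2} ((A_γ⁻¹)*φ)(w), written out over one
period of C̃, parametrized by w = A_γ(0,...,0,x), x ∈ [0,T]. -/
def ThetaC (hn : 0 < n) (H : HypElt n G) (k : ℕ) (z : Fin n → ℂ) : ℂ :=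
  ∫ x in (0 : ℝ)..H.T, ThetaPt G k (act H.A (curve n hn x)) z *
    ((Kr (act H.A (curve n hn x)) ^ (-(k : ℝ) / 2) : ℝ) : ℂ) *
    ((Kr (curve n hn x) ^ (((n : ℝ) + 1))⁻¹ : ℝ) : ℂ)

/-- The set of integer powers of a matrix. -/
def zpows (g : Matrix (Fin (n + 1)) (Fin (n + 1)) ℂ) :
    Set (Matrix (Fin (n + 1)) (Fin (n + 1)) ℂ) := {h | ∃ m : ℤ, h = g ^ m}

/-- The conjugate group A_γ⁻¹ Γ A_γ. -/
def conjGrp (G : DiscreteGroup n) (H : HypElt n G) :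
    Set (Matrix (Fin (n + 1)) (Fin (n + 1)) ℂ) :=
  (fun g => (H.A)⁻¹ * g * H.A) '' G.Γ

end

end BallPaper

namespace BallPaper

noncomputable section

variable {n : ℕ} {G : DiscreteGroup n}

/-! ### Basic facts about λ -/

lemma HypElt.lam_ne (H : HypElt n G) : H.lam ≠ 0 := by
  intro h; have := H.lam_sq; rw [h] at this; norm_num at this

lemma HypElt.lamC_ne (H : HypElt n G) : (H.lam : ℂ) ≠ 0 :=
  Complex.ofReal_ne_zero.mpr H.lam_ne

lemma HypElt.lamC_ne_one (H : HypElt n G) : (H.lam : ℂ) ≠ 1 := by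
  intro h
  have h1 : H.lam = 1 := by exact_mod_cast h
  have := H.lam_sq; rw [h1] at this; norm_num at this

lemma HypElt.lamC_ne_neg_one (H : HypElt n G) : (H.lam : ℂ) ≠ -1 := by
  intro h
  have h1 : H.lam = -1 := by exact_mod_cast h
  have := H.lam_sq; rw [h1] at this; norm_num at this

lemma HypElt.lamC_inv_ne_one (H : HypElt n G) : ((H.lam : ℂ))⁻¹ ≠ 1 := by
  intro h
  exact H.lamC_ne_one (by rw [← inv_inv (H.lam : ℂ), h, inv_one])

lemma HypElt.lamC_inv_ne_neg_one (H : HypElt n G) : ((H.lam : ℂ))⁻¹ ≠ -1 := by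
  intro h
  apply H.lamC_ne_neg_one
  rw [← inv_inv (H.lam : ℂ), h]
  norm_num

/-! ### Sesquilinearity of herm -/

lemma herm_smul_left (x : ℂ) (u v : Fin (n + 1) → ℂ) :
    herm (x • u) v = x * herm u v := by
  simp only [herm, Pi.smul_apply, smul_eq_mul]
  rw [mul_sub, Finset.mul_sum]
  congr 1
  · exact Finset.sum_congr rfl fun i _ => by ring
  · ring

lemma herm_smul_right (x : ℂ) (u v : Fin (n + 1) → ℂ) :
    herm u (x • v) = star x * herm u v := by
  simp only [herm, Pi.smul_apply, smul_eq_mul, star_mul']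
  rw [mul_sub, Finset.mul_sum]
  congr 1
  · exact Finset.sum_congr rfl fun i _ => by ring
  · ring

lemma herm_add_left (u u' v : Fin (n + 1) → ℂ) :
    herm (u + u') v = herm u v + herm u' v := by
  simp only [herm, Pi.add_apply, add_mul, Finset.sum_add_distrib]
  ring

lemma herm_add_right (u v v' : Fin (n + 1) → ℂ) :
    herm u (v + v') = herm u v + herm u v' := by
  simp only [herm, Pi.add_apply, star_add, mul_add, Finset.sum_add_distrib]
  ring

/-! ### herm on snoc vectors, pair facts -/

lemma herm_snoc1 (X Y : Fin n → ℂ) : herm (snoc1 X) (snoc1 Y) = pair X Y := by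
  simp [herm, pair, snoc1, Fin.snoc_castSucc, Fin.snoc_last]

lemma mul_star_self (z : ℂ) : z * star z = ((‖z‖ ^ 2 : ℝ) : ℂ) := by
  rw [Complex.star_def, Complex.mul_conj, Complex.sq_norm]

lemma pair_self_eq_zero {Z : Fin n → ℂ} (h : ∑ i, ‖Z i‖ ^ 2 = 1) : pair Z Z = 0 := by
  simp only [pair, mul_star_self]
  have h2 : (∑ i, ((‖Z i‖ ^ 2 : ℝ) : ℂ)) = ((∑ i, ‖Z i‖ ^ 2 : ℝ) : ℂ) := by
    push_cast; ring
  rw [h2, h]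
  simp

lemma star_pair (z w : Fin n → ℂ) : star (pair z w) = pair w z := by
  simp only [pair, star_sub, star_one, star_sum]
  congr 1
  exact Finset.sum_congr rfl fun i _ => by rw [star_mul', star_star]; ring

lemma HypElt.starX (H : HypElt n G) (i : Fin n) : star (H.X i) = H.X i :=
  Complex.conj_eq_iff_im.mpr (H.X_real i)

lemma HypElt.starY (H : HypElt n G) (i : Fin n) : star (H.Y i) = H.Y i :=
  Complex.conj_eq_iff_im.mpr (H.Y_real i)

lemma HypElt.pair_YX (H : HypElt n G) : pair H.Y H.X = pair H.X H.Y := by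
  simp only [pair]
  congr 1
  exact Finset.sum_congr rfl fun i _ => by rw [H.starX, H.starY]; ring

lemma HypElt.star_pairXY (H : HypElt n G) : star (pair H.X H.Y) = pair H.X H.Y := by
  rw [star_pair, H.pair_YX]

lemma HypElt.X_ne_Y (H : HypElt n G) : H.X ≠ H.Y := by
  intro h
  have h1 := H.eigX
  rw [h] at h1
  have h2 := congrFun (h1.symm.trans H.eigY) (Fin.last n)
  simp only [Pi.smul_apply, smul_eq_mul, snoc1, Fin.snoc_last, mul_one] at h2
  have h3 : (H.lam : ℂ) * H.lam = 1 := by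
    nth_rewrite 1 [h2]
    rw [inv_mul_cancel₀ H.lamC_ne]
  have h4 : H.lam * H.lam = 1 := by exact_mod_cast h3
  have := H.lam_sq
  nlinarith

lemma norm_sq_of_real {z : ℂ} (h : z.im = 0) : ‖z‖ ^ 2 = z.re ^ 2 := by
  rw [Complex.sq_norm, Complex.normSq_apply, h]
  ring

lemma HypElt.pair_XY_ne (H : HypElt n G) : pair H.X H.Y ≠ 0 := by
  intro hc
  have h1 : ∑ i, H.X i * H.Y i = (1 : ℂ) := by
    have he : pair H.X H.Y = ∑ i, H.X i * H.Y i - 1 := by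
      simp only [pair]
      congr 1
      exact Finset.sum_congr rfl fun i _ => by rw [H.starY]
    rw [he] at hc
    exact sub_eq_zero.mp hc
  have hre : ∑ i, (H.X i).re * (H.Y i).re = 1 := by
    have h2 := congrArg Complex.re h1
    rw [Complex.re_sum] at h2
    calc ∑ i, (H.X i).re * (H.Y i).re = ∑ i, (H.X i * H.Y i).re :=
          Finset.sum_congr rfl fun i _ => by
            rw [Complex.mul_re, H.X_real i, H.Y_real i]; ring
      _ = 1 := by simpa using h2
  have hx : ∑ i, (H.X i).re ^ 2 = 1 := by
    rw [← H.X_bd]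
    exact Finset.sum_congr rfl fun i _ => (norm_sq_of_real (H.X_real i)).symm
  have hy : ∑ i, (H.Y i).re ^ 2 = 1 := by
    rw [← H.Y_bd]
    exact Finset.sum_congr rfl fun i _ => (norm_sq_of_real (H.Y_real i)).symm
  have key : ∑ i, ((H.X i).re - (H.Y i).re) ^ 2 = 0 := by
    have : ∑ i, ((H.X i).re - (H.Y i).re) ^ 2
        = (∑ i, (H.X i).re ^ 2) - 2 * (∑ i, (H.X i).re * (H.Y i).re)
          + ∑ i, (H.Y i).re ^ 2 := by
      rw [Finset.mul_sum, ← Finset.sum_sub_distrib, ← Finset.sum_add_distrib]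
      exact Finset.sum_congr rfl fun i _ => by ring
    rw [this, hx, hy, hre]; ring
  have hall := (Finset.sum_eq_zero_iff_of_nonneg fun i _ => sq_nonneg _).mp key
  apply H.X_ne_Y
  funext i
  have h5 := hall i (Finset.mem_univ i)
  have h6 : (H.X i).re = (H.Y i).re := by nlinarith [h5]
  exact Complex.ext h6 (by rw [H.X_real i, H.Y_real i])

/-! ### herm orthogonality of the eigenvectors -/

lemma HypElt.herm_v_X (H : HypElt n G) (j : Fin (n - 1)) :
    herm (H.v j) (snoc1 H.X) = 0 := by
  have hSU := (G.sub_SU H.mem).2 (H.v j) (snoc1 H.X)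
  rw [H.v_eig j, H.eigX, herm_smul_left, herm_smul_right, Complex.star_def,
    Complex.conj_ofReal] at hSU
  rcases H.alph_pm j with h | h <;> rw [h] at hSU
  · have h2 : ((H.lam : ℂ) - 1) * herm (H.v j) (snoc1 H.X) = 0 := by
      linear_combination hSU
    rcases mul_eq_zero.mp h2 with h3 | h3
    · exact absurd (sub_eq_zero.mp h3) H.lamC_ne_one
    · exact h3
  · have h2 : ((H.lam : ℂ) + 1) * herm (H.v j) (snoc1 H.X) = 0 := by
      linear_combination -hSU
    rcases mul_eq_zero.mp h2 with h3 | h3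
    · exact absurd (by linear_combination h3) H.lamC_ne_neg_one
    · exact h3

lemma HypElt.herm_v_Y (H : HypElt n G) (j : Fin (n - 1)) :
    herm (H.v j) (snoc1 H.Y) = 0 := by
  have hSU := (G.sub_SU H.mem).2 (H.v j) (snoc1 H.Y)
  rw [H.v_eig j, H.eigY, herm_smul_left, herm_smul_right, star_inv₀, Complex.star_def,
    Complex.conj_ofReal] at hSU
  rcases H.alph_pm j with h | h <;> rw [h] at hSU
  · have h2 : (((H.lam : ℂ))⁻¹ - 1) * herm (H.v j) (snoc1 H.Y) = 0 := by
      linear_combination hSU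
    rcases mul_eq_zero.mp h2 with h3 | h3
    · exact absurd (sub_eq_zero.mp h3) H.lamC_inv_ne_one
    · exact h3
  · have h2 : (((H.lam : ℂ))⁻¹ + 1) * herm (H.v j) (snoc1 H.Y) = 0 := by
      linear_combination -hSU
    rcases mul_eq_zero.mp h2 with h3 | h3
    · exact absurd (by linear_combination h3) H.lamC_inv_ne_neg_one
    · exact h3

lemma HypElt.herm_X_v (H : HypElt n G) (j : Fin (n - 1)) :
    herm (snoc1 H.X) (H.v j) = 0 := by
  have hSU := (G.sub_SU H.mem).2 (snoc1 H.X) (H.v j)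
  rw [H.v_eig j, H.eigX, herm_smul_left, herm_smul_right] at hSU
  have hsa : star (H.alph j) = H.alph j := by
    rcases H.alph_pm j with h | h <;> rw [h] <;> simp
  rw [hsa] at hSU
  rcases H.alph_pm j with h | h <;> rw [h] at hSU
  · have h2 : ((H.lam : ℂ) - 1) * herm (snoc1 H.X) (H.v j) = 0 := by
      linear_combination hSU
    rcases mul_eq_zero.mp h2 with h3 | h3
    · exact absurd (sub_eq_zero.mp h3) H.lamC_ne_one
    · exact h3
  · have h2 : ((H.lam : ℂ) + 1) * herm (snoc1 H.X) (H.v j) = 0 := by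
      linear_combination -hSU
    rcases mul_eq_zero.mp h2 with h3 | h3
    · exact absurd (by linear_combination h3) H.lamC_ne_neg_one
    · exact h3

lemma HypElt.herm_Y_v (H : HypElt n G) (j : Fin (n - 1)) :
    herm (snoc1 H.Y) (H.v j) = 0 := by
  have hSU := (G.sub_SU H.mem).2 (snoc1 H.Y) (H.v j)
  rw [H.v_eig j, H.eigY, herm_smul_left, herm_smul_right] at hSU
  have hsa : star (H.alph j) = H.alph j := by
    rcases H.alph_pm j with h | h <;> rw [h] <;> simp
  rw [hsa] at hSU
  rcases H.alph_pm j with h | h <;> rw [h] at hSU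
  · have h2 : (((H.lam : ℂ))⁻¹ - 1) * herm (snoc1 H.Y) (H.v j) = 0 := by
      linear_combination hSU
    rcases mul_eq_zero.mp h2 with h3 | h3
    · exact absurd (sub_eq_zero.mp h3) H.lamC_inv_ne_one
    · exact h3
  · have h2 : (((H.lam : ℂ))⁻¹ + 1) * herm (snoc1 H.Y) (H.v j) = 0 := by
      linear_combination -hSU
    rcases mul_eq_zero.mp h2 with h3 | h3
    · exact absurd (by linear_combination h3) H.lamC_inv_ne_neg_one
    · exact h3

lemma HypElt.hermXX (H : HypElt n G) : herm (snoc1 H.X) (snoc1 H.X) = 0 := by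
  rw [herm_snoc1]; exact pair_self_eq_zero H.X_bd

lemma HypElt.hermYY (H : HypElt n G) : herm (snoc1 H.Y) (snoc1 H.Y) = 0 := by
  rw [herm_snoc1]; exact pair_self_eq_zero H.Y_bd

lemma HypElt.hermXY (H : HypElt n G) : herm (snoc1 H.X) (snoc1 H.Y) = pair H.X H.Y :=
  herm_snoc1 _ _

lemma HypElt.hermYX (H : HypElt n G) : herm (snoc1 H.Y) (snoc1 H.X) = pair H.X H.Y := by
  rw [herm_snoc1, H.pair_YX]

lemma HypElt.herm_combo_combo (H : HypElt n G) (s t s' t' : ℂ) :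
    herm (s • snoc1 H.X + t • snoc1 H.Y) (s' • snoc1 H.X + t' • snoc1 H.Y)
      = (s * star t' + t * star s') * pair H.X H.Y := by
  simp only [herm_add_left, herm_add_right, herm_smul_left, herm_smul_right,
    H.hermXX, H.hermYY, H.hermXY, H.hermYX]
  ring

lemma HypElt.herm_v_combo (H : HypElt n G) (j : Fin (n - 1)) (s t : ℂ) :
    herm (H.v j) (s • snoc1 H.X + t • snoc1 H.Y) = 0 := by
  rw [herm_add_right, herm_smul_right, herm_smul_right, H.herm_v_X, H.herm_v_Y]
  ring

lemma HypElt.herm_combo_v (H : HypElt n G) (j : Fin (n - 1)) (s t : ℂ) :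
    herm (s • snoc1 H.X + t • snoc1 H.Y) (H.v j) = 0 := by
  rw [herm_add_left, herm_smul_left, herm_smul_left, H.herm_X_v, H.herm_Y_v]
  ring

/-! ### The columns of A -/

/-- The index n−1 in Fin (n+1). -/
def pidx (n : ℕ) : Fin (n + 1) := ⟨n - 1, by omega⟩

lemma pidx_ne_last (hn : 0 < n) : pidx n ≠ Fin.last n := by
  intro h
  have h2 : n - 1 = n := congrArg Fin.val h
  omega

lemma colA_lt (H : HypElt n G) {j : Fin (n + 1)} (h : (j : ℕ) < n - 1) :
    (fun i => H.A i j) = H.v ⟨j, h⟩ := by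
  funext i
  simp [HypElt.A, Amat, h]

lemma colA_p (H : HypElt n G) (hn : 0 < n) :
    (fun i => H.A i (pidx n)) =
      (pair H.X H.Y)⁻¹ • snoc1 H.X + (2 : ℂ)⁻¹ • snoc1 H.Y := by
  funext i
  have h1 : ¬ (n - 1 < n - 1) := by omega
  simp [HypElt.A, Amat, pidx, h1]

lemma colA_last (H : HypElt n G) (hn : 0 < n) :
    (fun i => H.A i (Fin.last n)) =
      (pair H.X H.Y)⁻¹ • snoc1 H.X - (2 : ℂ)⁻¹ • snoc1 H.Y := by
  funext i
  have h1 : ¬ (n < n - 1) := by omega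
  have h2 : ¬ (n = n - 1) := by omega
  simp [HypElt.A, Amat, h1, h2]

lemma sub_smul_eq (s t : ℂ) (u w : Fin (n + 1) → ℂ) :
    s • u - t • w = s • u + (-t) • w := by
  rw [sub_eq_add_neg, neg_smul]

/-! ### The model matrix M -/

/-- The block matrix diag(α₁,…,α_{n−1}) ⊕ [[a,b],[b,a]]. -/
def Dmat (n : ℕ) (al : Fin (n - 1) → ℂ) (a b : ℂ) :
    Matrix (Fin (n + 1)) (Fin (n + 1)) ℂ :=
  Matrix.of fun i j =>
    if h : (i : ℕ) < n - 1 then (if j = i then al ⟨i, h⟩ else 0)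
    else if (i : ℕ) = n - 1 then (if (j : ℕ) = n - 1 then a else if j = Fin.last n then b else 0)
    else if (j : ℕ) = n - 1 then b else if j = Fin.last n then a else 0

def HypElt.ar (H : HypElt n G) : ℝ := (H.lam + H.lam⁻¹) / 2

def HypElt.br (H : HypElt n G) : ℝ := (H.lam - H.lam⁻¹) / 2

def HypElt.Mg (H : HypElt n G) : Matrix (Fin (n + 1)) (Fin (n + 1)) ℂ :=
  Dmat n H.alph ((H.ar : ℝ) : ℂ) ((H.br : ℝ) : ℂ)

lemma HypElt.ar_add_br (H : HypElt n G) : ((H.ar : ℂ)) + ((H.br : ℂ)) = (H.lam : ℂ) := by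
  have : H.ar + H.br = H.lam := by
    rw [HypElt.ar, HypElt.br]; ring
  exact_mod_cast congrArg (fun x : ℝ => (x : ℂ)) this

lemma HypElt.ar_sub_br (H : HypElt n G) : ((H.ar : ℂ)) - ((H.br : ℂ)) = ((H.lam : ℂ))⁻¹ := by
  have : H.ar - H.br = H.lam⁻¹ := by
    rw [HypElt.ar, HypElt.br]; ring
  calc ((H.ar : ℂ)) - ((H.br : ℂ)) = ((H.ar - H.br : ℝ) : ℂ) := by push_cast; ring
    _ = ((H.lam⁻¹ : ℝ) : ℂ) := by rw [this]
    _ = ((H.lam : ℂ))⁻¹ := by push_cast; ring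

lemma HypElt.ar_sq_sub_br_sq (H : HypElt n G) : H.ar ^ 2 - H.br ^ 2 = 1 := by
  have h := H.lam_ne
  rw [HypElt.ar, HypElt.br]
  field_simp
  ring

/-! ### A · M = γ · A -/

lemma HypElt.AM_eq (H : HypElt n G) (hn : 0 < n) : H.A * H.Mg = H.γ * H.A := by
  have hmulvec : ∀ (B : Matrix (Fin (n + 1)) (Fin (n + 1)) ℂ) (i j : Fin (n + 1)),
      (B * H.A) i j = B.mulVec (fun k => H.A k j) i := fun B i j => rfl
  ext i j
  rcases Nat.lt_trichotomy (j : ℕ) (n - 1) with hj | hj | hj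
  · -- j < n-1 : column is v_j
    have hcol : (fun k => H.A k j) = H.v ⟨j, hj⟩ := colA_lt H hj
    rw [hmulvec, hcol, H.v_eig, Matrix.mul_apply]
    have hjne : ¬ ((j : ℕ) = n - 1) := by omega
    have hjlast : ¬ (j = Fin.last n) := by
      intro h; rw [h, Fin.val_last] at hj; omega
    rw [Finset.sum_eq_single j]
    · have hMjj : H.Mg j j = H.alph ⟨j, hj⟩ := by
        simp [HypElt.Mg, Dmat, hj]
      rw [hMjj]
      have := congrFun hcol i
      simp only [this, Pi.smul_apply, smul_eq_mul]
      ring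
    · intro k _ hk
      have hMkj : H.Mg k j = 0 := by
        by_cases hk1 : (k : ℕ) < n - 1
        · have : ¬ (j = k) := fun h => hk h.symm
          simp [HypElt.Mg, Dmat, hk1, this]
        · by_cases hk2 : (k : ℕ) = n - 1 <;>
            simp [HypElt.Mg, Dmat, hk1, hk2, hjne, hjlast]
      rw [hMkj, mul_zero]
    · intro h; exact absurd (Finset.mem_univ j) h
  · -- j = pidx
    have hjp : j = pidx n := by
      apply Fin.ext; simpa [pidx] using hj
    subst hjp
    have hcol := colA_p H hn
    rw [hmulvec, hcol, Matrix.mulVec_add, Matrix.mulVec_smul, Matrix.mulVec_smul,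
      H.eigX, H.eigY, Matrix.mul_apply]
    -- LHS sum
    have hlast : H.A i (Fin.last n) * H.Mg (Fin.last n) (pidx n)
        = H.A i (Fin.last n) * (H.br : ℂ) := by
      have : H.Mg (Fin.last n) (pidx n) = (H.br : ℂ) := by
        have h1 : ¬ (n < n - 1) := by omega
        have h2 : ¬ (n = n - 1) := by omega
        simp [HypElt.Mg, Dmat, pidx, h1, h2]
      rw [this]
    rw [Fin.sum_univ_castSucc, hlast]
    have hsum : ∑ k : Fin n, H.A i k.castSucc * H.Mg k.castSucc (pidx n)
        = H.A i (pidx n) * (H.ar : ℂ) := by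
      have hp : (⟨n - 1, by omega⟩ : Fin n).castSucc = pidx n := by
        apply Fin.ext; simp [pidx]
      rw [Finset.sum_eq_single (⟨n - 1, by omega⟩ : Fin n)]
      · rw [hp]
        congr 1
        have h1 : ¬ (n - 1 < n - 1) := by omega
        simp [HypElt.Mg, Dmat, pidx, h1]
      · intro k _ hk
        have hk1 : (k.castSucc : ℕ) = (k : ℕ) := rfl
        have hkne : (k : ℕ) ≠ n - 1 := by
          intro h; exact hk (Fin.ext h)
        have hMk : H.Mg k.castSucc (pidx n) = 0 := by
          by_cases hklt : (k : ℕ) < n - 1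
          · have : ¬ ((pidx n : Fin (n+1)) = k.castSucc) := by
              intro h
              have := congrArg Fin.val h
              simp [pidx, hk1] at this
              omega
            simp [HypElt.Mg, Dmat, hk1, hklt, this]
          · have hkeq : (k : ℕ) = n - 1 := by have := k.isLt; omega
            exact absurd hkeq hkne
        rw [hMk, mul_zero]
      · intro h; exact absurd (Finset.mem_univ _) h
    rw [hsum]
    have hAi1 := congrFun (colA_p H hn) i
    have hAi2 := congrFun (colA_last H hn) i
    simp only [Pi.add_apply, Pi.sub_apply, Pi.smul_apply, smul_eq_mul] at hAi1 hAi2 ⊢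
    rw [hAi1, hAi2]
    linear_combination ((pair H.X H.Y)⁻¹ * snoc1 H.X i) * H.ar_add_br
      + ((2 : ℂ)⁻¹ * snoc1 H.Y i) * H.ar_sub_br
  · -- j = last
    have hjl : j = Fin.last n := by
      apply Fin.ext
      have := j.isLt
      simp only [Fin.val_last]
      omega
    subst hjl
    have hcol := colA_last H hn
    rw [hmulvec, hcol, sub_smul_eq, Matrix.mulVec_add, Matrix.mulVec_smul, Matrix.mulVec_smul,
      H.eigX, H.eigY, Matrix.mul_apply]
    have hlast : H.A i (Fin.last n) * H.Mg (Fin.last n) (Fin.last n)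
        = H.A i (Fin.last n) * (H.ar : ℂ) := by
      have : H.Mg (Fin.last n) (Fin.last n) = (H.ar : ℂ) := by
        have h1 : ¬ (n < n - 1) := by omega
        have h2 : ¬ (n = n - 1) := by omega
        simp [HypElt.Mg, Dmat, h1, h2]
      rw [this]
    rw [Fin.sum_univ_castSucc, hlast]
    have hsum : ∑ k : Fin n, H.A i k.castSucc * H.Mg k.castSucc (Fin.last n)
        = H.A i (pidx n) * (H.br : ℂ) := by
      have hp : (⟨n - 1, by omega⟩ : Fin n).castSucc = pidx n := by
        apply Fin.ext; simp [pidx]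
      rw [Finset.sum_eq_single (⟨n - 1, by omega⟩ : Fin n)]
      · rw [hp]
        congr 1
        have h1 : ¬ (n - 1 < n - 1) := by omega
        have h3 : ¬ (n = n - 1) := by omega
        simp [HypElt.Mg, Dmat, pidx, h1, h3]
      · intro k _ hk
        have hk1 : (k.castSucc : ℕ) = (k : ℕ) := rfl
        have hkne : (k : ℕ) ≠ n - 1 := fun h => hk (Fin.ext h)
        have hMk : H.Mg k.castSucc (Fin.last n) = 0 := by
          by_cases hklt : (k : ℕ) < n - 1
          · have : ¬ ((Fin.last n : Fin (n+1)) = k.castSucc) := by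
              intro h
              have := congrArg Fin.val h
              simp [Fin.val_last, hk1] at this
              omega
            simp [HypElt.Mg, Dmat, hk1, hklt, this]
          · have hkeq : (k : ℕ) = n - 1 := by have := k.isLt; omega
            exact absurd hkeq hkne
        rw [hMk, mul_zero]
      · intro h; exact absurd (Finset.mem_univ _) h
    rw [hsum]
    have hAi1 := congrFun (colA_p H hn) i
    have hAi2 := congrFun (colA_last H hn) i
    simp only [Pi.add_apply, Pi.sub_apply, Pi.smul_apply, smul_eq_mul, Pi.neg_apply,
      neg_mul] at hAi1 hAi2 ⊢
    rw [hAi1, hAi2]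
    linear_combination ((pair H.X H.Y)⁻¹ * snoc1 H.X i) * H.ar_add_br
      - ((2 : ℂ)⁻¹ * snoc1 H.Y i) * H.ar_sub_br

/-! ### The Gram identity and invertibility of A -/

lemma sigma_det : (sigmaM n).det = -1 := by
  rw [sigmaM, Matrix.det_diagonal, Fin.prod_univ_castSucc]
  have h1 : ∀ k : Fin n, (if k.castSucc = Fin.last n then (-1 : ℂ) else 1) = 1 :=
    fun k => if_neg (Fin.castSucc_lt_last k).ne
  simp [h1]

lemma star_two_inv : star ((2 : ℂ)⁻¹) = (2 : ℂ)⁻¹ := by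
  rw [star_inv₀]
  norm_num

lemma HypElt.star_cinv (H : HypElt n G) :
    star ((pair H.X H.Y)⁻¹) = (pair H.X H.Y)⁻¹ := by
  rw [star_inv₀, H.star_pairXY]

lemma HypElt.gram (H : HypElt n G) (hn : 0 < n) :
    H.Aᴴ * sigmaM n * H.A = sigmaM n := by
  have hc0 := H.pair_XY_ne
  ext l j
  have key : (H.Aᴴ * sigmaM n * H.A) l j
      = herm (fun k => H.A k j) (fun k => H.A k l) := by
    rw [Matrix.mul_apply]
    simp only [sigmaM, Matrix.mul_diagonal, Matrix.conjTranspose_apply]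
    rw [herm, Fin.sum_univ_castSucc]
    have h1 : ∀ k : Fin n, (if k.castSucc = Fin.last n then (-1 : ℂ) else 1) = 1 :=
      fun k => if_neg (Fin.castSucc_lt_last k).ne
    simp only [h1, eq_self_iff_true, if_true, mul_one]
    rw [sub_eq_add_neg]
    congr 1
    · exact Finset.sum_congr rfl fun k _ => by ring
    · ring
  rw [key]
  have hsig_ne : ∀ {l' j' : Fin (n + 1)}, l' ≠ j' → sigmaM n l' j' = 0 :=
    fun h => Matrix.diagonal_apply_ne _ h
  have hsig_p : sigmaM n (pidx n) (pidx n) = 1 := by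
    rw [sigmaM, Matrix.diagonal_apply_eq]
    exact if_neg (pidx_ne_last hn)
  have hsig_l : sigmaM n (Fin.last n) (Fin.last n) = -1 := by
    rw [sigmaM, Matrix.diagonal_apply_eq, if_pos rfl]
  rcases Nat.lt_trichotomy (j : ℕ) (n - 1) with hj | hj | hj
  · rcases Nat.lt_trichotomy (l : ℕ) (n - 1) with hl | hl | hl
    · -- both v columns
      rw [colA_lt H hj, colA_lt H hl, H.v_on]
      by_cases hjl : j = l
      · subst hjl
        have hjlast : j ≠ Fin.last n := by
          intro h; rw [h, Fin.val_last] at hj; omega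
        rw [if_pos rfl, sigmaM, Matrix.diagonal_apply_eq, if_neg hjlast]
      · have h2 : (⟨(j : ℕ), hj⟩ : Fin (n - 1)) ≠ ⟨(l : ℕ), hl⟩ := by
          intro h
          have h3 : (j : ℕ) = (l : ℕ) := by simpa using h
          exact hjl (Fin.ext h3)
        rw [if_neg h2, hsig_ne (fun h => hjl h.symm)]
    · have hlp : l = pidx n := Fin.ext hl
      subst hlp
      have hne : pidx n ≠ j := by
        intro h
        have h3 : n - 1 = (j : ℕ) := congrArg Fin.val h
        omega
      rw [colA_lt H hj, colA_p H hn, H.herm_v_combo, hsig_ne hne]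
    · have hll : l = Fin.last n := Fin.ext (by have := l.isLt; rw [Fin.val_last]; omega)
      subst hll
      have hne : Fin.last n ≠ j := by
        intro h
        have h3 : n = (j : ℕ) := congrArg Fin.val h
        omega
      rw [colA_lt H hj, colA_last H hn, sub_smul_eq, H.herm_v_combo, hsig_ne hne]
  · have hjp : j = pidx n := Fin.ext hj
    subst hjp
    rcases Nat.lt_trichotomy (l : ℕ) (n - 1) with hl | hl | hl
    · have hne : l ≠ pidx n := by
        intro h
        have h3 : (l : ℕ) = n - 1 := congrArg Fin.val h
        omega
      rw [colA_p H hn, colA_lt H hl, H.herm_combo_v, hsig_ne hne]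
    · have hlp : l = pidx n := Fin.ext hl
      subst hlp
      rw [colA_p H hn, H.herm_combo_combo, hsig_p, star_two_inv, H.star_cinv]
      field_simp
      ring
    · have hll : l = Fin.last n := Fin.ext (by have := l.isLt; rw [Fin.val_last]; omega)
      subst hll
      rw [colA_p H hn, colA_last H hn, sub_smul_eq, H.herm_combo_combo,
        hsig_ne (Ne.symm (pidx_ne_last hn)), star_neg, star_two_inv, H.star_cinv]
      ring
  · have hjl : j = Fin.last n := Fin.ext (by have := j.isLt; rw [Fin.val_last]; omega)
    subst hjl
    rcases Nat.lt_trichotomy (l : ℕ) (n - 1) with hl | hl | hl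
    · have hne : l ≠ Fin.last n := by
        intro h
        have h3 : (l : ℕ) = n := congrArg Fin.val h
        omega
      rw [colA_last H hn, colA_lt H hl, sub_smul_eq, H.herm_combo_v, hsig_ne hne]
    · have hlp : l = pidx n := Fin.ext hl
      subst hlp
      rw [colA_last H hn, colA_p H hn, sub_smul_eq, H.herm_combo_combo,
        hsig_ne (pidx_ne_last hn), star_two_inv, H.star_cinv]
      ring
    · have hll : l = Fin.last n := Fin.ext (by have := l.isLt; rw [Fin.val_last]; omega)
      subst hll
      rw [colA_last H hn, sub_smul_eq, H.herm_combo_combo, hsig_l,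
        star_neg, star_two_inv, H.star_cinv]
      field_simp
      ring

lemma HypElt.detA_ne (H : HypElt n G) (hn : 0 < n) : H.A.det ≠ 0 := by
  intro h0
  have h := congrArg Matrix.det (H.gram hn)
  rw [Matrix.det_mul, Matrix.det_mul, Matrix.det_conjTranspose, sigma_det, h0] at h
  simp at h

lemma HypElt.g0_eq (H : HypElt n G) (hn : 0 < n) : H.g0 = H.Mg := by
  have hA := H.AM_eq hn
  have hd : IsUnit H.A.det := isUnit_iff_ne_zero.mpr (H.detA_ne hn)
  rw [HypElt.g0, mul_assoc, ← hA, ← mul_assoc, Matrix.nonsing_inv_mul _ hd, one_mul]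

/-! ### The action of M on the geodesic -/

lemma lastI_castSucc (hn : 0 < n) : (lastI n hn).castSucc = pidx n := Fin.ext rfl

lemma HypElt.denom_Mg (H : HypElt n G) (hn : 0 < n) (x : ℝ) :
    denom H.Mg (curve n hn x) = (H.br : ℂ) * x + (H.ar : ℂ) := by
  rw [denom]
  have h1 : ¬ (n < n - 1) := by omega
  have h2 : ¬ (n = n - 1) := by omega
  have hlast : H.Mg (Fin.last n) (Fin.last n) = (H.ar : ℂ) := by
    simp [HypElt.Mg, Dmat, h1, h2]
  have hMrow : ∀ j : Fin n, H.Mg (Fin.last n) j.castSucc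
      = if (j : ℕ) = n - 1 then (H.br : ℂ) else 0 := by
    intro j
    simp [HypElt.Mg, Dmat, h1, h2, (Fin.castSucc_lt_last j).ne]
  have hsum : ∑ j : Fin n, H.Mg (Fin.last n) j.castSucc * curve n hn x j
      = (H.br : ℂ) * x := by
    have hterm : ∀ j : Fin n, H.Mg (Fin.last n) j.castSucc * curve n hn x j
        = if j = lastI n hn then (H.br : ℂ) * (x : ℂ) else 0 := by
      intro j
      rw [hMrow]
      by_cases hj : j = lastI n hn
      · subst hj
        have hcond : ((lastI n hn : Fin n) : ℕ) = n - 1 := rfl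
        rw [if_pos rfl, if_pos hcond]
        simp [curve]
      · have hcond : ¬ (((j : Fin n) : ℕ) = n - 1) := fun h => hj (Fin.ext h)
        rw [if_neg hj, if_neg hcond, zero_mul]
    rw [Finset.sum_congr rfl fun j _ => hterm j, Finset.sum_ite_eq']
    simp
  rw [hsum, hlast]

lemma HypElt.act_Mg (H : HypElt n G) (hn : 0 < n) (x : ℝ) :
    act H.Mg (curve n hn x) =
      curve n hn ((H.ar * x + H.br) / (H.br * x + H.ar)) := by
  funext j
  rw [act, H.denom_Mg hn x]
  by_cases hj : j = lastI n hn
  · subst hj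
    have h1 : ¬ (n - 1 < n - 1) := by omega
    have h2 : ¬ (n = n - 1) := by omega
    have hMrow : ∀ l : Fin n, H.Mg (lastI n hn).castSucc l.castSucc
        = if (l : ℕ) = n - 1 then (H.ar : ℂ) else 0 := by
      intro l
      rw [lastI_castSucc hn]
      simp [HypElt.Mg, Dmat, pidx, h1, (Fin.castSucc_lt_last l).ne]
    have hMlast : H.Mg (lastI n hn).castSucc (Fin.last n) = (H.br : ℂ) := by
      rw [lastI_castSucc hn]
      simp [HypElt.Mg, Dmat, pidx, h1, h2]
    have hsum : ∑ l : Fin n, H.Mg (lastI n hn).castSucc l.castSucc * curve n hn x l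
        = (H.ar : ℂ) * x := by
      have hterm : ∀ l : Fin n, H.Mg (lastI n hn).castSucc l.castSucc * curve n hn x l
          = if l = lastI n hn then (H.ar : ℂ) * (x : ℂ) else 0 := by
        intro l
        rw [hMrow]
        by_cases hl : l = lastI n hn
        · subst hl
          have hcond : ((lastI n hn : Fin n) : ℕ) = n - 1 := rfl
          rw [if_pos rfl, if_pos hcond]
          simp [curve]
        · have hcond : ¬ (((l : Fin n) : ℕ) = n - 1) := fun h => hl (Fin.ext h)
          rw [if_neg hl, if_neg hcond, zero_mul]
      rw [Finset.sum_congr rfl fun l _ => hterm l, Finset.sum_ite_eq']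
      simp
    rw [hsum, hMlast]
    have hcur : curve n hn ((H.ar * x + H.br) / (H.br * x + H.ar)) (lastI n hn)
        = (((H.ar * x + H.br) / (H.br * x + H.ar) : ℝ) : ℂ) := by
      simp [curve]
    rw [hcur]
    push_cast
    ring
  · have hjne : (j : ℕ) ≠ n - 1 := fun h => hj (Fin.ext h)
    have hjlt : (j : ℕ) < n - 1 := by have := j.isLt; omega
    have hMlast : H.Mg j.castSucc (Fin.last n) = 0 := by
      simp [HypElt.Mg, Dmat, hjlt, (Fin.castSucc_lt_last j).ne']
    have hsum : ∑ l : Fin n, H.Mg j.castSucc l.castSucc * curve n hn x l = 0 := by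
      apply Finset.sum_eq_zero
      intro l _
      by_cases hl : l = j
      · have hcur : curve n hn x l = 0 := by
          rw [hl]
          simp [curve, hj]
        rw [hcur, mul_zero]
      · have hM : H.Mg j.castSucc l.castSucc = 0 := by
          have hne : ¬ (l.castSucc = j.castSucc) := fun h => hl (Fin.castSucc_injective n h)
          simp [HypElt.Mg, Dmat, hjlt, hne]
        rw [hM, zero_mul]
    rw [hsum, hMlast]
    have hcur : curve n hn ((H.ar * x + H.br) / (H.br * x + H.ar)) j = 0 := by
      simp [curve, hj]
    rw [hcur]
    simp

/-! ### Kr on the geodesic -/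

lemma Kr_curve (hn : 0 < n) (s : ℝ) :
    Kr (curve n hn s) = (Nat.factorial n : ℝ) / Real.pi ^ n * ((1 - s ^ 2)⁻¹) ^ (n + 1) := by
  rw [Kr]
  have hterm : ∀ i : Fin n, ‖curve n hn s i‖ ^ 2 = if i = lastI n hn then s ^ 2 else 0 := by
    intro i
    by_cases hi : i = lastI n hn
    · subst hi
      rw [if_pos rfl]
      have hcur : curve n hn s (lastI n hn) = ((s : ℝ) : ℂ) := by simp [curve]
      rw [hcur, Complex.norm_real, Real.norm_eq_abs, _root_.sq_abs]
    · rw [if_neg hi]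
      simp [curve, hi]
  rw [Finset.sum_congr rfl fun i _ => hterm i, Finset.sum_ite_eq']
  simp

/-! ### The derivative of the action along the geodesic -/

lemma HypElt.g_ne (H : HypElt n G) {x : ℝ} (h1 : -1 < x) (h2 : x < 1) :
    H.br * x + H.ar ≠ 0 := by
  have hsq := H.ar_sq_sub_br_sq
  intro h
  have hx2 : x ^ 2 < 1 := by nlinarith
  have ha : H.ar = -(H.br * x) := by linarith
  rw [ha] at hsq
  nlinarith [sq_nonneg H.br, mul_le_mul_of_nonneg_left hx2.le (sq_nonneg H.br)]

lemma HypElt.hasDeriv_frac (H : HypElt n G) {x : ℝ} (hg : H.br * x + H.ar ≠ 0) :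
    HasDerivAt (fun t : ℝ => (H.ar * t + H.br) / (H.br * t + H.ar))
      ((H.br * x + H.ar) ^ 2)⁻¹ x := by
  have h1 : HasDerivAt (fun t : ℝ => H.ar * t + H.br) H.ar x := by
    simpa using ((hasDerivAt_id x).const_mul H.ar).add_const H.br
  have h2 : HasDerivAt (fun t : ℝ => H.br * t + H.ar) H.br x := by
    simpa using ((hasDerivAt_id x).const_mul H.br).add_const H.ar
  have h3 := h1.div h2 hg
  refine h3.congr_deriv ?_
  have hnum : H.ar * (H.br * x + H.ar) - (H.ar * x + H.br) * H.br = 1 := by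
    linear_combination H.ar_sq_sub_br_sq
  rw [hnum]
  rw [inv_eq_one_div]


end

end BallPaper


open BallPaper in
/-- the 1-form φ(z) = K(z,z)^{1/(n+1)} dzₙ restricted to C̃₀ is
γ₀-invariant: K(γ₀z,γ₀z)^{1/(n+1)} · d/dx (n-th coordinate of γ₀ applied to (0,…,0,x))
equals K(z,z)^{1/(n+1)} at z = (0,…,0,x). -/
theorem phi_g0_invariant (n : ℕ) (hn : 0 < n) (G : BallPaper.DiscreteGroup n)
    (H : BallPaper.HypElt n G) :
    ∀ x : ℝ, -1 < x → x < 1 →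
      Kr (act H.g0 (curve n hn x)) ^ (((n : ℝ) + 1))⁻¹ *
        deriv (fun t : ℝ => (act H.g0 (curve n hn t) (lastI n hn)).re) x =
      Kr (curve n hn x) ^ (((n : ℝ) + 1))⁻¹ := by
  intro x hx1 hx2
  have hg := H.g_ne hx1 hx2
  have hx3 : (0 : ℝ) < 1 - x ^ 2 := by nlinarith
  have hgsq : (0 : ℝ) < (H.br * x + H.ar) ^ 2 := by positivity
  have hfun : (fun t : ℝ => (act H.g0 (curve n hn t) (lastI n hn)).re)
      = fun t : ℝ => (H.ar * t + H.br) / (H.br * t + H.ar) := by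
    funext t
    rw [H.g0_eq hn, H.act_Mg hn t]
    have hcur : curve n hn ((H.ar * t + H.br) / (H.br * t + H.ar)) (lastI n hn)
        = (((H.ar * t + H.br) / (H.br * t + H.ar) : ℝ) : ℂ) := by simp [curve]
    rw [hcur, Complex.ofReal_re]
  rw [hfun, (H.hasDeriv_frac hg).deriv]
  rw [H.g0_eq hn, H.act_Mg hn x, Kr_curve hn, Kr_curve hn]
  have hs2 : 1 - ((H.ar * x + H.br) / (H.br * x + H.ar)) ^ 2
      = (1 - x ^ 2) / (H.br * x + H.ar) ^ 2 := by
    rw [div_pow, eq_div_iff (pow_ne_zero 2 hg), sub_mul, div_mul_cancel₀ _ (pow_ne_zero 2 hg)]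
    linear_combination (1 - x ^ 2) * H.ar_sq_sub_br_sq
  rw [hs2]
  have hC : (0 : ℝ) ≤ (Nat.factorial n : ℝ) / Real.pi ^ n := by positivity
  have hkey : ∀ v : ℝ, 0 ≤ v →
      ((Nat.factorial n : ℝ) / Real.pi ^ n * v ^ (n + 1)) ^ (((n : ℝ) + 1))⁻¹
        = ((Nat.factorial n : ℝ) / Real.pi ^ n) ^ (((n : ℝ) + 1))⁻¹ * v := by
    intro v hv
    rw [Real.mul_rpow hC (pow_nonneg hv _)]
    congr 1
    rw [← Real.rpow_natCast v (n + 1), ← Real.rpow_mul hv]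
    have h1 : ((n + 1 : ℕ) : ℝ) * (((n : ℝ) + 1))⁻¹ = 1 := by
      push_cast
      field_simp
    rw [h1, Real.rpow_one]
  rw [hkey _ (by positivity), hkey _ (by positivity), inv_div]
  have hne : (1 - x ^ 2) ≠ 0 := ne_of_gt hx3
  have hne2 : (H.br * x + H.ar) ^ 2 ≠ 0 := ne_of_gt hgsq
  field_simp
end

section
/- Fix a real number u with −1 < u < 1. As the integer m → ∞ (m ≥ 3), the integral ∫_{−1}^{1} (1−x²)^{m/2 − 1}·(1−xu)^{−m} dx is asymptotic to √(2π/(m−2))·(1−u²)^{−m/2}, i.e., the ratio of the two sides tends to 1. -/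
open scoped BigOperators
open Complex MeasureTheory Filter Topology Matrix

section LaplaceAux

noncomputable def Jf (s : ℝ) : ℝ := ∫ t in (-1:ℝ)..1, (1 - t^2) ^ s

lemma cont_integrand {s : ℝ} (hs : 0 ≤ s) : Continuous fun t : ℝ => (1 - t^2) ^ s := by
  have : ∀ x : ℝ, ContinuousAt (fun y : ℝ => y ^ s) x := fun x =>
    Real.continuousAt_rpow_const x s (Or.inr hs)
  exact (continuous_iff_continuousAt.2 this).comp (by continuity)

lemma Jf_zero : Jf 0 = 2 := by
  simp [Jf]; norm_num

lemma Jf_half : Jf (1/2) = Real.pi / 2 := by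
  have : ∀ t : ℝ, (1 - t^2) ^ ((1:ℝ)/2) = Real.sqrt (1 - t^2) := fun t =>
    (Real.sqrt_eq_rpow _).symm
  rw [Jf]
  simp_rw [this]
  exact integral_sqrt_one_sub_sq

lemma Jf_pos {s : ℝ} (hs : 0 ≤ s) : 0 < Jf s := by
  apply intervalIntegral.intervalIntegral_pos_of_pos_on
    ((cont_integrand hs).intervalIntegrable _ _)
  · intro x hx
    have h1 : 0 < 1 - x^2 := by nlinarith [hx.1, hx.2]
    exact Real.rpow_pos_of_pos h1 s
  · norm_num

lemma Jf_mono {s s' : ℝ} (hs : 0 ≤ s) (h : s ≤ s') : Jf s' ≤ Jf s := by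
  apply intervalIntegral.integral_mono_on (by norm_num)
    ((cont_integrand (hs.trans h)).intervalIntegrable _ _)
    ((cont_integrand hs).intervalIntegrable _ _)
  intro x hx
  rcases eq_or_lt_of_le (show (0:ℝ) ≤ 1 - x^2 by nlinarith [hx.1, hx.2]) with h0 | h0
  · rw [← h0]
    rcases eq_or_lt_of_le hs with rfl | hs'
    · rcases eq_or_lt_of_le h with rfl | h'
      · exact le_refl _
      · simp [Real.zero_rpow (ne_of_gt h')]
    · rw [Real.zero_rpow (ne_of_gt hs'), Real.zero_rpow (ne_of_gt (hs'.trans_le h))]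
  · exact Real.rpow_le_rpow_of_exponent_ge h0 (by nlinarith [hx.1, hx.2, sq_nonneg x]) h

lemma Jf_rec {s : ℝ} (hs : 0 ≤ s) : (2*s+3) * Jf (s+1) = (2*s+2) * Jf s := by
  have hs1 : (1:ℝ) ≤ s + 1 := by linarith
  have hderiv : ∀ t ∈ Set.uIcc (-1:ℝ) 1, HasDerivAt (fun t : ℝ => t * (1 - t^2)^(s+1))
      ((2*s+3) * (1-t^2)^(s+1) - (2*s+2) * (1-t^2)^s) t := by
    intro t _
    have h1 : HasDerivAt (fun t : ℝ => 1 - t^2) (-(2*t)) t := by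
      simpa using ((hasDerivAt_pow 2 t).const_sub 1)
    have h2 : HasDerivAt (fun y : ℝ => y ^ (s+1)) ((s+1) * (1-t^2)^(s+1-1)) (1 - t^2) :=
      Real.hasDerivAt_rpow_const (Or.inr hs1)
    have h4 := (hasDerivAt_id t).mul (h2.comp t h1)
    have he : s + 1 - 1 = s := by ring
    rw [he] at h4
    simp only [Function.comp, id, Pi.mul_def] at h4
    refine h4.congr_deriv ?_
    symm
    rcases eq_or_ne (1 - t^2) 0 with h0 | h0
    · have ht2 : t^2 = 1 := by linarith [h0]
      rw [h0, Real.zero_rpow (by positivity : (s+1:ℝ) ≠ 0)]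
      linear_combination (2*(s+1)*((0:ℝ)^s)) * ht2
    · rw [Real.rpow_add_one h0]
      ring
  have hc1 : Continuous fun t : ℝ => (1 - t^2) ^ (s+1) := cont_integrand (by linarith)
  have hc0 : Continuous fun t : ℝ => (1 - t^2) ^ s := cont_integrand hs
  have hcont : Continuous fun t : ℝ =>
      (2*s+3) * (1-t^2)^(s+1) - (2*s+2) * (1-t^2)^s :=
    ((continuous_const.mul hc1).sub (continuous_const.mul hc0))
  have key := intervalIntegral.integral_eq_sub_of_hasDerivAt hderiv
    (hcont.intervalIntegrable _ _)
  have hz : ((1:ℝ) - 1^2) ^ (s+1) = 0 := by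
    norm_num
    exact Real.zero_rpow (by positivity)
  have hz' : ((1:ℝ) - (-1)^2) ^ (s+1) = 0 := by
    norm_num
    exact Real.zero_rpow (by positivity)
  rw [hz, hz'] at key
  rw [intervalIntegral.integral_sub (f := fun t : ℝ => (2*s+3) * (1-t^2)^(s+1)) (g := fun t : ℝ => (2*s+2) * (1-t^2)^s) ((continuous_const.mul hc1).intervalIntegrable _ _)
    ((continuous_const.mul hc0).intervalIntegrable _ _),
    intervalIntegral.integral_const_mul, intervalIntegral.integral_const_mul] at key
  have : (2*s+3) * Jf (s+1) - (2*s+2) * Jf s = 0 := by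
    rw [Jf, Jf]; linarith [key]
  linarith

section Subst
variable {u : ℝ} (hu1 : -1 < u) (hu2 : u < 1)

lemma hcle (hu1 : -1 < u) (hu2 : u < 1) :
    ∀ x ∈ Set.Icc (-1:ℝ) 1, 1 - |u| ≤ 1 - x * u := by
  intro x hx
  have hx' : |x| ≤ 1 := abs_le.mpr ⟨hx.1, hx.2⟩
  have h1 : |x * u| ≤ |u| := by
    rw [abs_mul]
    nlinarith [abs_nonneg u]
  have := neg_abs_le (x * u)
  have := le_abs_self (x * u)
  linarith

lemma fmem (hu1 : -1 < u) (hu2 : u < 1) :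
    ∀ t ∈ Set.Icc (-1:ℝ) 1, (t + u) / (1 + t * u) ∈ Set.Icc (-1:ℝ) 1 := by
  intro t ht
  have hC : 0 < 1 + t * u := by
    have hu : |u| < 1 := abs_lt.mpr ⟨hu1, hu2⟩
    have h1 : |t * u| ≤ |u| := by
      rw [abs_mul]
      nlinarith [abs_le.mpr ⟨ht.1, ht.2⟩, abs_nonneg u]
    have h3 := neg_abs_le (t * u)
    linarith
  constructor
  · rw [le_div_iff₀ hC]
    nlinarith [ht.1, ht.2]
  · rw [div_le_one hC]
    nlinarith [ht.1, ht.2]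

lemma subst_integral (m : ℕ) (hm : 3 ≤ m) (hu1 : -1 < u) (hu2 : u < 1) :
    (∫ x in (-1:ℝ)..1, (1 - x ^ 2) ^ ((m : ℝ) / 2 - 1) * (1 - x * u) ^ (-(m : ℝ)))
      = (1 - u ^ 2) ^ (-(m : ℝ) / 2) * Jf ((m : ℝ) / 2 - 1) := by
  have hm3 : (3:ℝ) ≤ (m:ℝ) := by exact_mod_cast hm
  set s : ℝ := (m : ℝ) / 2 - 1 with hsdef
  have hs : (1:ℝ)/2 ≤ s := by rw [hsdef]; linarith
  have hs0 : (0:ℝ) < s := lt_of_lt_of_le (by norm_num) hs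
  set c : ℝ := 1 - |u| with hcdef
  have hu : |u| < 1 := abs_lt.mpr ⟨hu1, hu2⟩
  have hc : 0 < c := by rw [hcdef]; linarith
  have hB : (0:ℝ) < 1 - u^2 := by nlinarith
  set g : ℝ → ℝ := fun x => (1 - x^2)^s * (max (1 - x*u) c) ^ (-(m:ℝ)) with hgdef
  have hgcont : Continuous g := by
    apply Continuous.mul (cont_integrand hs0.le)
    apply Continuous.rpow_const
    · exact (continuous_const.sub (continuous_id.mul continuous_const)).max continuous_const
    · intro x
      left
      exact ne_of_gt (lt_of_lt_of_le hc (le_max_right _ _))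
  set f : ℝ → ℝ := fun t => (t + u) / (1 + t * u) with hfdef
  set f' : ℝ → ℝ := fun t => (1 - u^2) / (1 + t * u)^2 with hf'def
  have hCpos : ∀ t ∈ Set.Icc (-1:ℝ) 1, 0 < 1 + t * u := by
    intro t ht
    have h1 : |t * u| ≤ |u| := by
      rw [abs_mul]
      nlinarith [abs_le.mpr ⟨ht.1, ht.2⟩, abs_nonneg u]
    have h3 := neg_abs_le (t * u)
    linarith
  have huIcc : Set.uIcc (-1:ℝ) 1 = Set.Icc (-1:ℝ) 1 := Set.uIcc_of_le (by norm_num)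
  have hfderiv : ∀ t ∈ Set.uIcc (-1:ℝ) 1, HasDerivAt f (f' t) t := by
    intro t ht
    rw [huIcc] at ht
    have hC := hCpos t ht
    have h1 : HasDerivAt (fun t : ℝ => t + u) 1 t := (hasDerivAt_id t).add_const u
    have h2 : HasDerivAt (fun t : ℝ => 1 + t * u) u t := by
      simpa using ((hasDerivAt_id t).mul_const u).const_add 1
    have h3 := h1.div h2 (ne_of_gt hC)
    have : (1 * (1 + t * u) - (t + u) * u) / (1 + t * u)^2 = f' t := by
      rw [hf'def]
      congr 1
      ring
    rwa [this] at h3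
  have hf'cont : ContinuousOn f' (Set.uIcc (-1:ℝ) 1) := by
    rw [huIcc]
    apply ContinuousOn.div continuousOn_const
    · fun_prop
    · intro t ht
      exact pow_ne_zero 2 (ne_of_gt (hCpos t ht))
  have key := intervalIntegral.integral_comp_smul_deriv hfderiv hf'cont hgcont
  -- key : ∫ t in -1..1, f' t • g (f t) = ∫ x in f (-1)..f 1, g x
  have hfm1 : f (-1) = -1 := by
    rw [hfdef]
    simp only
    rw [div_eq_iff (by nlinarith : (1:ℝ) + (-1) * u ≠ 0)]
    ring
  have hf1 : f 1 = 1 := by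
    rw [hfdef]
    simp only
    rw [div_eq_iff (by nlinarith : (1:ℝ) + 1 * u ≠ 0)]
    ring
  rw [hfm1, hf1] at key
  -- RHS of key equals the original integral
  have hright : (∫ x in (-1:ℝ)..1, g x)
      = ∫ x in (-1:ℝ)..1, (1 - x ^ 2) ^ s * (1 - x * u) ^ (-(m : ℝ)) := by
    apply intervalIntegral.integral_congr
    intro x hx
    rw [huIcc] at hx
    rw [hgdef]
    simp only
    rw [max_eq_left (hcle hu1 hu2 x hx)]
  -- LHS of key equals (1-u²)^(-m/2) * Jf s
  have hleft : (∫ t in (-1:ℝ)..1, f' t • g (f t))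
      = ∫ t in (-1:ℝ)..1, (1 - u^2) ^ (-(m:ℝ)/2) * (1 - t^2) ^ s := by
    apply intervalIntegral.integral_congr
    intro t ht
    rw [huIcc] at ht
    have hC := hCpos t ht
    have hft := fmem hu1 hu2 t ht
    have hfA : 1 - (f t)^2 = (1 - t^2) * (1 - u^2) / (1 + t*u)^2 := by
      rw [hfdef]
      field_simp
      ring
    have hfu : 1 - (f t) * u = (1 - u^2) / (1 + t*u) := by
      rw [hfdef]
      field_simp
      ring
    have hmax : max (1 - f t * u) c = (1 - u^2) / (1 + t*u) := by
      rw [← hfu]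
      exact max_eq_left (hcle hu1 hu2 _ hft)
    show f' t * g (f t) = _
    rw [hgdef]
    simp only
    rw [hfA, hmax, hf'def]
    simp only
    rcases eq_or_lt_of_le (show (0:ℝ) ≤ 1 - t^2 by nlinarith [ht.1, ht.2]) with hA0 | hA
    · rw [← hA0]
      rw [show (0:ℝ) * (1 - u^2) / (1 + t*u)^2 = 0 by ring]
      rw [Real.zero_rpow (ne_of_gt hs0)]
      ring
    · -- all positive; use exp/log form
      set A := 1 - t^2
      set B := 1 - u^2
      set C := 1 + t*u
      rw [Real.rpow_def_of_pos (by positivity : (0:ℝ) < A * B / C^2),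
        Real.rpow_def_of_pos (by positivity : (0:ℝ) < B / C),
        Real.rpow_def_of_pos hB, Real.rpow_def_of_pos hA]
      have l1 : Real.log (A * B / C^2) = Real.log A + Real.log B - 2 * Real.log C := by
        rw [Real.log_div (by positivity) (by positivity), Real.log_mul (ne_of_gt hA) (ne_of_gt hB),
          Real.log_pow]
        push_cast
        ring
      have l2 : Real.log (B / C) = Real.log B - Real.log C := Real.log_div (ne_of_gt hB) (ne_of_gt hC)
      have l3 : B / C^2 = Real.exp (Real.log B - 2 * Real.log C) := by
        rw [show (2:ℝ) * Real.log C = Real.log (C^2) by rw [Real.log_pow]; push_cast; ring,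
          Real.exp_sub, Real.exp_log hB, Real.exp_log (by positivity)]
      rw [l1, l2, l3, ← Real.exp_add, ← Real.exp_add, ← Real.exp_add]
      congr 1
      rw [hsdef]
      ring
  simp only [Function.comp] at key
  rw [hleft, intervalIntegral.integral_const_mul] at key
  rw [← hright, ← key, Jf]

end Subst

lemma Jf_prod : ∀ k : ℕ, ((k:ℝ)/2 + 1) * Jf ((k:ℝ)/2) * Jf ((k:ℝ)/2 + 1/2) = Real.pi := by
  intro k
  induction k with
  | zero =>
    norm_num [Jf_zero, Jf_half]
    ring
  | succ n ih =>
    have h2 : ((n+1:ℕ):ℝ)/2 + 1/2 = (n:ℝ)/2 + 1 := by push_cast; ring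
    have h1 : ((n+1:ℕ):ℝ)/2 = (n:ℝ)/2 + 1/2 := by push_cast; ring
    rw [h2, h1]
    have hrec := Jf_rec (s := (n:ℝ)/2) (by positivity)
    linear_combination ih + (Jf ((n:ℝ)/2 + 1/2)/2) * hrec

lemma Jf_prod' (m : ℕ) (hm : 3 ≤ m) :
    Jf ((m:ℝ)/2 - 1) * Jf ((m:ℝ)/2 - 1/2) = 2 * Real.pi / (m:ℝ) := by
  have hm3 : (3:ℝ) ≤ (m:ℝ) := by exact_mod_cast hm
  have h := Jf_prod (m - 2)
  have hc : ((m - 2 : ℕ):ℝ) = (m:ℝ) - 2 := by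
    have : 2 ≤ m := by omega
    push_cast [this]
    ring
  rw [hc] at h
  have h1 : ((m:ℝ) - 2)/2 = (m:ℝ)/2 - 1 := by ring
  have h2 : ((m:ℝ) - 2)/2 + 1/2 = (m:ℝ)/2 - 1/2 := by ring
  have h3 : ((m:ℝ) - 2)/2 + 1 = (m:ℝ)/2 := by ring
  rw [h3, h2, h1] at h
  rw [eq_div_iff (by linarith : (m:ℝ) ≠ 0)]
  linear_combination 2 * h

lemma Jf_limit : Filter.Tendsto (fun m : ℕ =>
    Jf ((m:ℝ)/2 - 1) / Real.sqrt (2 * Real.pi / ((m:ℝ) - 2))) atTop (𝓝 1) := by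
  have hpi : (0:ℝ) < Real.pi := Real.pi_pos
  set q : ℕ → ℝ := fun m => Jf ((m:ℝ)/2 - 1)^2 * (((m:ℝ) - 2) / (2 * Real.pi)) with hqdef
  have hq : Filter.Tendsto q atTop (𝓝 1) := by
    have hlb : ∀ᶠ m : ℕ in atTop, ((m:ℝ) - 2)/(m:ℝ) ≤ q m := by
      filter_upwards [Filter.eventually_ge_atTop 3] with m hm
      have hm3 : (3:ℝ) ≤ (m:ℝ) := by exact_mod_cast hm
      have hs : (0:ℝ) ≤ (m:ℝ)/2 - 1 := by linarith
      have hprod := Jf_prod' m hm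
      rw [eq_div_iff (by linarith : (m:ℝ) ≠ 0)] at hprod
      have hmono := Jf_mono hs (show (m:ℝ)/2 - 1 ≤ (m:ℝ)/2 - 1/2 by linarith)
      have hpos := Jf_pos hs
      have hpos2 := Jf_pos (show (0:ℝ) ≤ (m:ℝ)/2 - 1/2 by linarith)
      rw [hqdef]
      simp only
      rw [← mul_div_assoc, div_le_div_iff₀ (by linarith : (0:ℝ) < (m:ℝ)) (by positivity)]
      nlinarith [mul_nonneg (mul_nonneg (mul_nonneg
        (show (0:ℝ) ≤ (m:ℝ) - 2 by linarith) (show (0:ℝ) ≤ (m:ℝ) by linarith)) hpos.le)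
        (sub_nonneg.2 hmono)]
    have hub : ∀ᶠ m : ℕ in atTop, q m ≤ (((m:ℝ) + 1)/(m:ℝ)) * (((m:ℝ) - 2)/(m:ℝ)) := by
      filter_upwards [Filter.eventually_ge_atTop 3] with m hm
      have hm3 : (3:ℝ) ≤ (m:ℝ) := by exact_mod_cast hm
      have hs : (0:ℝ) ≤ (m:ℝ)/2 - 1 := by linarith
      have hprod := Jf_prod' m hm
      rw [eq_div_iff (by linarith : (m:ℝ) ≠ 0)] at hprod
      have hpos := Jf_pos hs
      have hpos2 := Jf_pos (show (0:ℝ) ≤ (m:ℝ)/2 - 1/2 by linarith)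
      have hrec := Jf_rec (s := (m:ℝ)/2 - 1) hs
      rw [show (m:ℝ)/2 - 1 + 1 = (m:ℝ)/2 by ring] at hrec
      have hmono := Jf_mono (show (0:ℝ) ≤ (m:ℝ)/2 - 1/2 by linarith)
        (show (m:ℝ)/2 - 1/2 ≤ (m:ℝ)/2 by linarith)
      have hpos3 := Jf_pos (show (0:ℝ) ≤ (m:ℝ)/2 by linarith)
      have hkey : (m:ℝ) * Jf ((m:ℝ)/2 - 1) ≤ ((m:ℝ)+1) * Jf ((m:ℝ)/2 - 1/2) := by
        nlinarith
      rw [hqdef]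
      simp only
      rw [div_mul_div_comm, ← mul_div_assoc,
        div_le_div_iff₀ (by positivity) (by positivity : (0:ℝ) < (m:ℝ)*(m:ℝ))]
      nlinarith [mul_le_mul_of_nonneg_left hkey
        (mul_nonneg (mul_nonneg hpos.le (show (0:ℝ) ≤ (m:ℝ) - 2 by linarith))
          (show (0:ℝ) ≤ (m:ℝ) by linarith))]
    have lim0 : Filter.Tendsto (fun m : ℕ => (2:ℝ) / (m:ℝ)) atTop (𝓝 0) :=
      tendsto_const_div_atTop_nhds_zero_nat 2
    have lim0' : Filter.Tendsto (fun m : ℕ => (1:ℝ) / (m:ℝ)) atTop (𝓝 0) :=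
      tendsto_const_div_atTop_nhds_zero_nat 1
    have lim1 : Filter.Tendsto (fun m : ℕ => ((m:ℝ) - 2)/(m:ℝ)) atTop (𝓝 1) := by
      have : Filter.Tendsto (fun m : ℕ => 1 - (2:ℝ)/(m:ℝ)) atTop (𝓝 (1 - 0)) :=
        tendsto_const_nhds.sub lim0
      rw [sub_zero] at this
      apply this.congr'
      filter_upwards [Filter.eventually_ge_atTop 1] with m hm
      have : (m:ℝ) ≠ 0 := by
        have : (1:ℝ) ≤ (m:ℝ) := by exact_mod_cast hm
        linarith
      field_simp
    have lim2 : Filter.Tendsto (fun m : ℕ => (((m:ℝ) + 1)/(m:ℝ)) * (((m:ℝ) - 2)/(m:ℝ)))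
        atTop (𝓝 1) := by
      have l3 : Filter.Tendsto (fun m : ℕ => ((m:ℝ) + 1)/(m:ℝ)) atTop (𝓝 1) := by
        have : Filter.Tendsto (fun m : ℕ => 1 + (1:ℝ)/(m:ℝ)) atTop (𝓝 (1 + 0)) :=
          tendsto_const_nhds.add lim0'
        rw [add_zero] at this
        apply this.congr'
        filter_upwards [Filter.eventually_ge_atTop 1] with m hm
        have : (m:ℝ) ≠ 0 := by
          have : (1:ℝ) ≤ (m:ℝ) := by exact_mod_cast hm
          linarith
        field_simp
      have := l3.mul lim1
      rwa [mul_one] at this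
    exact tendsto_of_tendsto_of_tendsto_of_le_of_le' lim1 lim2 hlb hub
  have heq : ∀ᶠ m : ℕ in atTop,
      Real.sqrt (q m) = Jf ((m:ℝ)/2 - 1) / Real.sqrt (2 * Real.pi / ((m:ℝ) - 2)) := by
    filter_upwards [Filter.eventually_ge_atTop 3] with m hm
    have hm3 : (3:ℝ) ≤ (m:ℝ) := by exact_mod_cast hm
    have hpos := Jf_pos (show (0:ℝ) ≤ (m:ℝ)/2 - 1 by linarith)
    rw [hqdef]
    simp only
    rw [show ((m:ℝ) - 2) / (2 * Real.pi) = (2 * Real.pi / ((m:ℝ) - 2))⁻¹ from (inv_div _ _).symm]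
    rw [Real.sqrt_mul (sq_nonneg _), Real.sqrt_sq hpos.le, Real.sqrt_inv, ← div_eq_mul_inv]
  have h2 : Filter.Tendsto (fun m => Real.sqrt (q m)) atTop (𝓝 1) := by
    have := hq.sqrt
    rwa [Real.sqrt_one] at this
  exact h2.congr' heq


end LaplaceAux

open Filter Topology in
/-- for fixed u ∈ (−1,1), as m → ∞,
∫_{−1}^1 (1−x²)^{m/2−1} (1−xu)^{−m} dx ~ √(2π/(m−2)) (1−u²)^{−m/2}. -/
theorem laplace_asymptotics (u : ℝ) (hu1 : -1 < u) (hu2 : u < 1) :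
    Tendsto (fun m : ℕ =>
      (∫ x in (-1 : ℝ)..1, (1 - x ^ 2) ^ ((m : ℝ) / 2 - 1) * (1 - x * u) ^ (-(m : ℝ))) /
        (Real.sqrt (2 * Real.pi / ((m : ℝ) - 2)) * (1 - u ^ 2) ^ (-(m : ℝ) / 2)))
      atTop (𝓝 1) := by
  have hB : (0:ℝ) < 1 - u^2 := by nlinarith
  apply Jf_limit.congr'
  filter_upwards [Filter.eventually_ge_atTop 3] with m hm
  have hm3 : (3:ℝ) ≤ (m:ℝ) := by exact_mod_cast hm
  have hepos : (0:ℝ) < (1 - u^2) ^ (-(m:ℝ)/2) := Real.rpow_pos_of_pos hB _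
  have hXpos : (0:ℝ) < Real.sqrt (2 * Real.pi / ((m:ℝ) - 2)) :=
    Real.sqrt_pos.mpr (div_pos (by positivity) (by linarith))
  rw [subst_integral m hm hu1 hu2,
    mul_comm ((1 - u ^ 2) ^ (-(m:ℝ) / 2)) (Jf ((m:ℝ)/2 - 1)),
    mul_div_mul_right _ _ hepos.ne']
end

section
/- Let n ≥ 1 be an integer and let T be a real number with 0 < T < 1. Then, as the integer k → ∞, c(𝔹ⁿ,k)·(n!/πⁿ)^{2/(n+1)}·∫₀^{T} [∫_{−1}^{1} (1−x²)^{((n+1)k)/2 − 1}·(1−xu)^{−(n+1)k} dx]·(1−u²)^{((n+1)k)/2 − 1} du is asymptotic to k^{n−1/2}·√2·(n+1)^{n−1/2}·π^{−(3n−1)/(2n+2)}·(n!)^{−(n−1)/(n+1)}·arctanh(T), i.e., the ratio of the two sides tends to 1. (For T = (λ²−1)/(λ²+1) with λ² > 1 one has arctanh(T) = ln|λ|.) -/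
open scoped BigOperators
open Complex MeasureTheory Filter Topology Matrix

section J2auxiliary

open MeasureTheory intervalIntegral Set Filter Topology

/-- `Cint a = ∫_{-1}^1 (1-y²)^a dy`. -/
noncomputable def Cint (a : ℝ) : ℝ := ∫ y in (-1:ℝ)..1, (1 - y^2) ^ a

lemma contC {a : ℝ} (ha : 0 ≤ a) : Continuous fun y : ℝ => (1 - y^2) ^ a := by
  apply continuous_iff_continuousAt.2
  intro x
  exact (Real.continuousAt_rpow_const _ _ (Or.inr ha)).comp (by fun_prop)

lemma Cint_pos {a : ℝ} (ha : 0 ≤ a) : 0 < Cint a := by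
  apply intervalIntegral_pos_of_pos_on ((contC ha).intervalIntegrable _ _)
  · intro x hx
    have h1 : 0 < 1 - x^2 := by nlinarith [hx.1, hx.2]
    exact Real.rpow_pos_of_pos h1 a
  · norm_num

lemma Cint_zero : Cint 0 = 2 := by
  simp [Cint, Real.rpow_zero]; norm_num

lemma Cint_half : Cint (1/2) = Real.pi / 2 := by
  rw [← integral_sqrt_one_sub_sq, Cint]
  apply intervalIntegral.integral_congr
  intro x _
  simp only [Real.sqrt_eq_rpow]

lemma Cint_mono {a b : ℝ} (ha : 0 ≤ a) (hab : a ≤ b) : Cint b ≤ Cint a := by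
  apply intervalIntegral.integral_mono_on (by norm_num)
    ((contC (ha.trans hab)).intervalIntegrable _ _) ((contC ha).intervalIntegrable _ _)
  intro x hx
  rcases eq_or_lt_of_le (show (0:ℝ) ≤ 1 - x^2 by nlinarith [hx.1, hx.2]) with h | h
  · rcases eq_or_lt_of_le ha with rfl | ha'
    · rcases eq_or_lt_of_le hab with rfl | hb'
      · exact le_rfl
      · rw [← h, Real.zero_rpow (ne_of_gt hb'), Real.rpow_zero]; norm_num
    · rw [← h, Real.zero_rpow (ne_of_gt (ha'.trans_le hab)), Real.zero_rpow (ne_of_gt ha')]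
  · exact Real.rpow_le_rpow_of_exponent_ge h (by nlinarith [sq_nonneg x]) hab

lemma rpow_add_one' {x c : ℝ} (hx : 0 ≤ x) (hc : 0 ≤ c) : x ^ (c+1) = x ^ c * x := by
  rcases eq_or_lt_of_le hx with rfl | hx'
  · rw [Real.zero_rpow (by positivity), mul_zero]
  · rw [Real.rpow_add_one (ne_of_gt hx')]

lemma Cint_rec {c : ℝ} (hc : 0 ≤ c) : (2*c+3) * Cint (c+1) = (2*c+2) * Cint c := by
  have hder : ∀ y ∈ Set.uIcc (-1:ℝ) 1, HasDerivAt (fun y : ℝ => y * (1-y^2)^(c+1))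
      ((2*c+3) * (1 - y^2)^(c+1) - (2*c+2) * (1-y^2)^c) y := by
    intro y hy
    have hy' : y ∈ Icc (-1:ℝ) 1 := by rwa [Set.uIcc_of_le (by norm_num)] at hy
    have hb : (0:ℝ) ≤ 1 - y^2 := by nlinarith [hy'.1, hy'.2]
    have h1 : HasDerivAt (fun y : ℝ => 1 - y^2) (-(2*y)) y := by
      simpa using ((hasDerivAt_pow 2 y).const_sub 1)
    have h2 : HasDerivAt (fun x : ℝ => x ^ (c+1)) ((c+1) * (1-y^2)^c) (1-y^2) := by
      have := Real.hasDerivAt_rpow_const (x := 1-y^2) (p := c+1) (Or.inr (by linarith))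
      simpa using this
    have h3 := h2.comp y h1
    have h4 := (hasDerivAt_id y).mul h3
    refine h4.congr_deriv ?_
    simp only [Function.comp_apply, id_eq]
    rw [rpow_add_one' hb hc]
    ring
  have hint : IntervalIntegrable
      (fun y : ℝ => (2*c+3) * (1 - y^2)^(c+1) - (2*c+2) * (1-y^2)^c) volume (-1) 1 :=
    ((continuous_const.mul (contC (by linarith : (0:ℝ) ≤ c+1))).sub
      (continuous_const.mul (contC hc))).intervalIntegrable _ _
  have key := integral_eq_sub_of_hasDerivAt hder hint
  rw [intervalIntegral.integral_sub (f := fun y : ℝ => (2*c+3) * (1 - y^2)^(c+1)) (g := fun y : ℝ => (2*c+2) * (1-y^2)^c) ((continuous_const.mul (contC (by linarith : (0:ℝ) ≤ c+1))).intervalIntegrable _ _) ((continuous_const.mul (contC hc)).intervalIntegrable _ _),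
    intervalIntegral.integral_const_mul, intervalIntegral.integral_const_mul] at key
  have e1 : ((1:ℝ) - 1^2) ^ (c+1) = 0 := by
    norm_num; exact Real.zero_rpow (by positivity)
  have e2 : ((1:ℝ) - (-1)^2) ^ (c+1) = 0 := by
    norm_num; exact Real.zero_rpow (by positivity)
  rw [e1, e2] at key
  have : (2*c+3) * Cint (c+1) - (2*c+2) * Cint c = 0 := by
    rw [Cint, Cint]; linarith [key]
  linarith

lemma f_inv (j : ℕ) : ((j:ℝ)/2 + 1) * (Cint ((j:ℝ)/2) * Cint ((j:ℝ)/2 + 1/2)) = Real.pi := by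
  induction j with
  | zero => simp [Cint_zero]; rw [show (2:ℝ)⁻¹ = 1/2 by norm_num, Cint_half]; ring
  | succ j IH =>
    set c : ℝ := (j:ℝ)/2 with hc
    have hc0 : 0 ≤ c := by positivity
    have hrec := Cint_rec hc0
    have hcast : ((j:ℕ)+1 : ℝ)/2 = c + 1/2 := by rw [hc]; ring
    push_cast
    rw [hcast, show c + 1/2 + 1/2 = c + 1 by ring]
    have hCc : Cint (c+1) = (2*c+2)/(2*c+3) * Cint c := by
      field_simp; linarith
    rw [hCc, ← IH]
    field_simp
    ring

lemma squeeze_j (j : ℕ) (hj : 1 ≤ j) :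
    Real.pi ≤ ((j:ℝ)/2 + 1) * Cint ((j:ℝ)/2)^2 ∧
    ((j:ℝ)/2 + 1) * Cint ((j:ℝ)/2)^2 ≤ Real.pi * (((j:ℝ)+2)/((j:ℝ)+1)) := by
  set a : ℝ := (j:ℝ)/2 with ha
  have ha0 : 0 ≤ a := by positivity
  have hj1 : (1:ℝ) ≤ (j:ℝ) := by exact_mod_cast hj
  have ha2 : (0:ℝ) ≤ a - 1/2 := by rw [ha]; linarith
  have hfi := f_inv j
  rw [← ha] at hfi
  have hm1 : Cint (a + 1/2) ≤ Cint a := Cint_mono ha0 (by linarith)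
  have hm2 : Cint a ≤ Cint (a - 1/2) := by
    have := Cint_mono ha2 (show a - 1/2 ≤ a by linarith)
    exact this
  have hrec := Cint_rec ha2
  rw [show a - 1/2 + 1 = a + 1/2 by ring] at hrec
  have hp1 : 0 < Cint a := Cint_pos ha0
  have hp2 : 0 < Cint (a + 1/2) := Cint_pos (by linarith)
  have hp3 : 0 < Cint (a - 1/2) := Cint_pos ha2
  constructor
  · nlinarith [hfi, hm1, hp1, mul_nonneg (mul_nonneg (show (0:ℝ) ≤ a+1 by linarith) hp1.le)
      (sub_nonneg.2 hm1)]
  · have hj2 : (((j:ℝ)+2)/((j:ℝ)+1)) = (2*a+2)/(2*a+1) := by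
      rw [ha]; congr 1 <;> ring
    rw [hj2, mul_div_assoc', le_div_iff₀ (by linarith : (0:ℝ) < 2*a+1)]
    have e0 : (2*a+1) * Cint (a-1/2) = (2*a+2) * Cint (a+1/2) := by linarith [hrec]
    have e1 : (a+1) * Cint a * ((2*a+1) * Cint (a-1/2)) = Real.pi * (2*a+2) := by
      rw [e0]; linear_combination (2*a+2) * hfi
    nlinarith [e1, mul_nonneg (mul_nonneg (mul_nonneg (show (0:ℝ) ≤ a+1 by linarith) hp1.le)
      (show (0:ℝ) ≤ 2*a+1 by linarith)) (sub_nonneg.2 hm2)]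

lemma tendsto_sqrtC (n : ℕ) (hn : 0 < n) :
    Tendsto (fun k : ℕ => Real.sqrt (((n:ℝ)+1)*(k:ℝ)) * Cint ((((n:ℝ)+1)*(k:ℝ))/2 - 1))
      atTop (𝓝 (Real.sqrt (2*Real.pi))) := by
  have hm : Tendsto (fun k : ℕ => ((n:ℝ)+1)*(k:ℝ)) atTop atTop :=
    Tendsto.const_mul_atTop (by positivity) tendsto_natCast_atTop_atTop
  have hm1 : Tendsto (fun k : ℕ => ((n:ℝ)+1)*(k:ℝ) - 1) atTop atTop :=
    tendsto_atTop_add_const_right _ _ hm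
  have hinv : Tendsto (fun k : ℕ => (((n:ℝ)+1)*(k:ℝ) - 1)⁻¹) atTop (𝓝 0) :=
    hm1.inv_tendsto_atTop
  have hg : Tendsto (fun k : ℕ => 2*Real.pi * (((n:ℝ)+1)*(k:ℝ)/(((n:ℝ)+1)*(k:ℝ) - 1)))
      atTop (𝓝 (2*Real.pi)) := by
    have h2 : Tendsto (fun k : ℕ => 2*Real.pi * (1 + (((n:ℝ)+1)*(k:ℝ) - 1)⁻¹))
        atTop (𝓝 (2*Real.pi)) := by
      have := (tendsto_const_nhds (x := (1:ℝ)) (f := atTop (α := ℕ))).add hinv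
      have h3 := this.const_mul (2*Real.pi)
      simpa using h3
    apply h2.congr'
    filter_upwards [hm1.eventually_gt_atTop 0] with k hk
    have : ((n:ℝ)+1)*(k:ℝ) - 1 ≠ 0 := ne_of_gt hk
    field_simp
    ring
  have hsq : Tendsto (fun k : ℕ => (((n:ℝ)+1)*(k:ℝ)) * Cint ((((n:ℝ)+1)*(k:ℝ))/2 - 1)^2)
      atTop (𝓝 (2*Real.pi)) := by
    apply tendsto_of_tendsto_of_tendsto_of_le_of_le' tendsto_const_nhds hg
    · filter_upwards [eventually_ge_atTop 2] with k hk
      have h3 : 3 ≤ (n+1)*k := by nlinarith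
      set j : ℕ := (n+1)*k - 2 with hj
      have hj1 : 1 ≤ j := by omega
      have hjc : (j:ℝ) = ((n:ℝ)+1)*(k:ℝ) - 2 := by
        rw [hj]; push_cast [Nat.cast_sub (by omega : 2 ≤ (n+1)*k)]; ring
      have harg : (((n:ℝ)+1)*(k:ℝ))/2 - 1 = (j:ℝ)/2 := by rw [hjc]; ring
      rw [harg]
      have := (squeeze_j j hj1).1
      nlinarith [this]
    · filter_upwards [eventually_ge_atTop 2] with k hk
      have h3 : 3 ≤ (n+1)*k := by nlinarith
      set j : ℕ := (n+1)*k - 2 with hj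
      have hj1 : 1 ≤ j := by omega
      have hjc : (j:ℝ) = ((n:ℝ)+1)*(k:ℝ) - 2 := by
        rw [hj]; push_cast [Nat.cast_sub (by omega : 2 ≤ (n+1)*k)]; ring
      have harg : (((n:ℝ)+1)*(k:ℝ))/2 - 1 = (j:ℝ)/2 := by rw [hjc]; ring
      rw [harg]
      have h4 := (squeeze_j j hj1).2
      have h5 : ((j:ℝ)+2)/((j:ℝ)+1) = ((n:ℝ)+1)*(k:ℝ)/(((n:ℝ)+1)*(k:ℝ) - 1) := by
        rw [hjc]; congr 1 <;> ring
      rw [h5] at h4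
      nlinarith [h4]
  have hcomp := (Real.continuous_sqrt.tendsto _).comp hsq
  apply hcomp.congr'
  filter_upwards [eventually_ge_atTop 2] with k hk
  have hk2 : (2:ℝ) ≤ ((n:ℝ)+1)*(k:ℝ) := by
    have : (2:ℝ) ≤ (k:ℝ) := by exact_mod_cast hk
    nlinarith [Nat.cast_nonneg (α := ℝ) n]
  have hCpos := Cint_pos (show (0:ℝ) ≤ (((n:ℝ)+1)*(k:ℝ))/2 - 1 by linarith)
  simp only [Function.comp]
  rw [Real.sqrt_mul (by linarith), Real.sqrt_sq hCpos.le]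

lemma inner_integral {m u : ℝ} (hm : 2 ≤ m) (hu0 : 0 ≤ u) (hu1 : u < 1) :
    ∫ x in (-1:ℝ)..1, (1 - x^2) ^ (m/2 - 1) * (1 - x*u) ^ (-m)
      = (1 - u^2) ^ (-(m/2)) * Cint (m/2 - 1) := by
  have he : (0:ℝ) ≤ m/2 - 1 := by linarith
  have hB : (0:ℝ) < 1 - u^2 := by nlinarith
  set φ : ℝ → ℝ := fun y => (y+u)/(1+y*u) with hφ
  set φ' : ℝ → ℝ := fun y => (1-u^2)/(1+y*u)^2 with hφ'
  set g : ℝ → ℝ := fun x => (1 - x^2) ^ (m/2 - 1) * (1 - x*u) ^ (-m) with hg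
  have hden : ∀ y : ℝ, y ∈ Icc (-1:ℝ) 1 → 0 < 1 + y*u := by
    intro y hy
    nlinarith [hy.1, hy.2]
  have huIcc : Set.uIcc (-1:ℝ) 1 = Icc (-1:ℝ) 1 := Set.uIcc_of_le (by norm_num)
  have hderiv : ∀ y ∈ Set.uIcc (-1:ℝ) 1, HasDerivAt φ (φ' y) y := by
    intro y hy
    rw [huIcc] at hy
    have h1 : HasDerivAt (fun y : ℝ => y + u) 1 y := (hasDerivAt_id y).add_const u
    have h2 : HasDerivAt (fun y : ℝ => 1 + y*u) u y := by
      simpa using ((hasDerivAt_id y).mul_const u).const_add 1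
    have := h1.div h2 (ne_of_gt (hden y hy))
    refine this.congr_deriv ?_
    rw [hφ']
    field_simp
    ring
  have himg : φ '' Set.uIcc (-1:ℝ) 1 ⊆ Icc (-1:ℝ) 1 := by
    rintro _ ⟨y, hy, rfl⟩
    rw [huIcc] at hy
    have hD := hden y hy
    constructor
    · rw [hφ, le_div_iff₀ hD]; nlinarith [hy.1, hy.2]
    · rw [hφ, div_le_iff₀ hD]; nlinarith [hy.1, hy.2]
  have hgcont : ContinuousOn g (Icc (-1:ℝ) 1) := by
    apply ContinuousOn.mul ((contC he).continuousOn)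
    intro x hx
    have hpos : 0 < 1 - x*u := by nlinarith [hx.1, hx.2]
    apply ContinuousAt.continuousWithinAt
    have h1 : ContinuousAt (fun t : ℝ => t ^ (-m)) (1 - x*u) :=
      Real.continuousAt_rpow_const _ _ (Or.inl (ne_of_gt hpos))
    have h2 : ContinuousAt (fun x : ℝ => 1 - x*u) x := by fun_prop
    show ContinuousAt ((fun t : ℝ => t ^ (-m)) ∘ fun x : ℝ => 1 - x*u) x
    exact ContinuousAt.comp (f := fun x : ℝ => 1 - x*u) (g := fun t : ℝ => t ^ (-m)) h1 h2
  have hφ'cont : ContinuousOn φ' (Set.uIcc (-1:ℝ) 1) := by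
    rw [huIcc]
    intro y hy
    exact (ContinuousAt.continuousWithinAt (by
      apply ContinuousAt.div (by fun_prop) (by fun_prop)
      exact pow_ne_zero 2 (ne_of_gt (hden y hy))))
  have hsub := integral_comp_mul_deriv' hderiv hφ'cont (hgcont.mono himg)
  have hφa : φ (-1) = -1 := by
    simp only [hφ]
    rw [div_eq_iff (ne_of_gt (show (0:ℝ) < 1 + (-1)*u by nlinarith))]
    ring
  have hφb : φ 1 = 1 := by
    simp only [hφ]
    rw [div_eq_iff (ne_of_gt (show (0:ℝ) < 1 + 1*u by nlinarith))]
    ring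
  rw [hφa, hφb] at hsub
  rw [← hsub]
  have hcongr : ∀ᵐ y : ℝ, y ∈ Set.uIoc (-1:ℝ) 1 →
      (g ∘ φ) y * φ' y = (1 - u^2) ^ (-(m/2)) * (1 - y^2) ^ (m/2 - 1) := by
    have hone : ∀ᵐ y : ℝ, y ≠ 1 := by
      refine MeasureTheory.ae_iff.mpr ?_
      simpa [not_not, Set.setOf_eq_eq_singleton] using Real.volume_singleton (a := (1:ℝ))
    filter_upwards [hone] with y hy1 hy
    rw [Set.uIoc_of_le (by norm_num)] at hy
    have hylt : y < 1 := lt_of_le_of_ne hy.2 hy1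
    have hA : (0:ℝ) < 1 - y^2 := by nlinarith [hy.1]
    have hD : (0:ℝ) < 1 + y*u := by nlinarith [hy.1, hylt]
    have e1 : 1 - (φ y)^2 = (1-y^2)*(1-u^2)/(1+y*u)^2 := by
      rw [hφ]; field_simp; ring
    have e2 : 1 - (φ y)*u = (1-u^2)/(1+y*u) := by
      rw [hφ]; field_simp; ring
    simp only [Function.comp, hg, hφ']
    rw [show 1 - ((y+u)/(1+y*u))^2 = 1 - (φ y)^2 from rfl,
        show 1 - ((y+u)/(1+y*u))*u = 1 - (φ y)*u from rfl, e1, e2]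
    have hAB : (0:ℝ) < (1-y^2)*(1-u^2)/(1+y*u)^2 := by positivity
    have hBD : (0:ℝ) < (1-u^2)/(1+y*u) := by positivity
    have hBD2 : (0:ℝ) < (1-u^2)/(1+y*u)^2 := by positivity
    rw [Real.rpow_def_of_pos hAB, Real.rpow_def_of_pos hBD, Real.rpow_def_of_pos hB,
      Real.rpow_def_of_pos hA, show (1-u^2)/(1+y*u)^2 = Real.exp (Real.log ((1-u^2)/(1+y*u)^2))
        from (Real.exp_log hBD2).symm]
    rw [← Real.exp_add, ← Real.exp_add, ← Real.exp_add]
    congr 1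
    rw [Real.log_div (by positivity) (by positivity), Real.log_div (by positivity) (by positivity),
      Real.log_div (by positivity) (by positivity), Real.log_mul (ne_of_gt hA) (ne_of_gt hB),
      Real.log_pow]
    ring
  rw [intervalIntegral.integral_congr_ae hcongr, intervalIntegral.integral_const_mul]
  rfl

lemma artanh_deriv {x : ℝ} (h0 : -1 < x) (h1 : x < 1) :
    HasDerivAt BallPaper.artanh ((1 - x^2)⁻¹) x := by
  have hd : (0:ℝ) < 1 - x := by linarith
  have hn : (0:ℝ) < 1 + x := by linarith
  have hp : (0:ℝ) < (1+x)/(1-x) := by positivity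
  have h1' : HasDerivAt (fun x : ℝ => (1+x)/(1-x)) (2/(1-x)^2) x := by
    have ha : HasDerivAt (fun x : ℝ => 1+x) 1 x := by
      simpa using (hasDerivAt_id x).const_add 1
    have hb : HasDerivAt (fun x : ℝ => 1-x) (-1) x := by
      simpa using (hasDerivAt_id x).const_sub 1
    have := ha.div hb (ne_of_gt hd)
    refine this.congr_deriv ?_
    field_simp
    ring
  have h2' := (Real.hasDerivAt_log (ne_of_gt hp)).comp x h1'
  have h3' := h2'.div_const 2
  have hx2 : (1:ℝ) - x^2 ≠ 0 := by nlinarith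
  have heq : ((1+x)/(1-x))⁻¹ * (2/(1-x)^2) / 2 = (1-x^2)⁻¹ := by
    rw [inv_div]
    field_simp
    ring
  have h4 : HasDerivAt BallPaper.artanh (((1+x)/(1-x))⁻¹ * (2/(1-x)^2) / 2) x := h3'
  rwa [heq] at h4

lemma artanh_integral {T : ℝ} (hT0 : 0 < T) (hT1 : T < 1) :
    ∫ u in (0:ℝ)..T, (1 - u^2)⁻¹ = BallPaper.artanh T := by
  have hder : ∀ u ∈ Set.uIcc (0:ℝ) T, HasDerivAt BallPaper.artanh ((1 - u^2)⁻¹) u := by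
    intro u hu
    rw [Set.uIcc_of_le hT0.le] at hu
    exact artanh_deriv (by linarith [hu.1]) (lt_of_le_of_lt hu.2 hT1)
  have hcont : ContinuousOn (fun u : ℝ => (1 - u^2)⁻¹) (Set.uIcc (0:ℝ) T) := by
    apply ContinuousOn.inv₀ (by fun_prop)
    intro u hu
    rw [Set.uIcc_of_le hT0.le] at hu
    have : u < 1 := lt_of_le_of_lt hu.2 hT1
    nlinarith [hu.1]
  rw [integral_eq_sub_of_hasDerivAt hder (hcont.intervalIntegrable)]
  have : BallPaper.artanh 0 = 0 := by simp [BallPaper.artanh]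
  rw [this, sub_zero]

lemma outer_integral {m T : ℝ} (hm : 2 ≤ m) (hT0 : 0 < T) (hT1 : T < 1) :
    (∫ u in (0:ℝ)..T, (∫ x in (-1:ℝ)..1, (1 - x^2) ^ (m/2 - 1) * (1 - x*u) ^ (-m)) *
      (1 - u^2) ^ (m/2 - 1)) = Cint (m/2 - 1) * BallPaper.artanh T := by
  have hcongr : ∀ u ∈ Set.uIcc (0:ℝ) T,
      (∫ x in (-1:ℝ)..1, (1 - x^2) ^ (m/2 - 1) * (1 - x*u) ^ (-m)) * (1 - u^2) ^ (m/2 - 1)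
        = Cint (m/2 - 1) * (1 - u^2)⁻¹ := by
    intro u hu
    rw [Set.uIcc_of_le hT0.le] at hu
    have hu1 : u < 1 := lt_of_le_of_lt hu.2 hT1
    have hB : (0:ℝ) < 1 - u^2 := by nlinarith [hu.1]
    rw [inner_integral hm hu.1 hu1, mul_right_comm, ← Real.rpow_add hB,
      show -(m/2) + (m/2 - 1) = -1 by ring, Real.rpow_neg_one, mul_comm]
  rw [intervalIntegral.integral_congr hcongr, intervalIntegral.integral_const_mul,
    artanh_integral hT0 hT1]

lemma cB_tendsto (n : ℕ) (hn : 0 < n) :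
    Tendsto (fun k : ℕ => (BallPaper.cB n k : ℝ) * (Nat.factorial n) /
      (((n:ℝ)+1)*(k:ℝ))^n) atTop (𝓝 1) := by
  simp only [BallPaper.cB]
  have hfac : Tendsto (fun k : ℕ => ∏ i ∈ Finset.range n,
      ((((n:ℝ)+1)*(k:ℝ) - 1 - (i:ℝ))/(((n:ℝ)+1)*(k:ℝ)))) atTop (𝓝 1) := by
    have h1 : Tendsto (fun k : ℕ => ∏ i ∈ Finset.range n,
        ((((n:ℝ)+1)*(k:ℝ) - 1 - (i:ℝ))/(((n:ℝ)+1)*(k:ℝ)))) atTop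
        (𝓝 (∏ _i ∈ Finset.range n, (1:ℝ))) := by
      apply tendsto_finset_prod
      intro i _
      have hm : Tendsto (fun k : ℕ => ((n:ℝ)+1)*(k:ℝ)) atTop atTop :=
        Tendsto.const_mul_atTop (by positivity) tendsto_natCast_atTop_atTop
      have hinv : Tendsto (fun k : ℕ => (((n:ℝ)+1)*(k:ℝ))⁻¹) atTop (𝓝 0) :=
        hm.inv_tendsto_atTop
      have h2 : Tendsto (fun k : ℕ => 1 - (1+(i:ℝ)) * (((n:ℝ)+1)*(k:ℝ))⁻¹) atTop (𝓝 1) := by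
        have := (hinv.const_mul (1+(i:ℝ))).const_sub 1
        simpa using this
      apply h2.congr'
      filter_upwards [hm.eventually_gt_atTop 0] with k hk
      have hk' : (k:ℝ) ≠ 0 := by rintro h; simp [h] at hk
      field_simp
      ring
    simpa using h1
  apply hfac.congr'
  filter_upwards [eventually_ge_atTop 1] with k hk
  obtain ⟨k', rfl⟩ : ∃ k', k = k'+1 := ⟨k-1, by omega⟩
  have hM : (n+1)*(k'+1-1)+n = (n+1)*(k'+1) - 1 := by
    rw [Nat.mul_succ, Nat.add_sub_cancel]
    set A := (n+1)*k'
    omega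
  rw [hM]
  set M : ℕ := (n+1)*(k'+1) - 1 with hMdef
  have hMcast : (M:ℝ) = ((n:ℝ)+1)*((k'+1 : ℕ):ℝ) - 1 := by
    rw [hMdef]
    have : 1 ≤ (n+1)*(k'+1) := Nat.mul_pos (Nat.succ_pos n) (Nat.succ_pos k')
    push_cast [Nat.cast_sub this]
    ring
  have hchoose : (Nat.choose M n : ℝ) * (Nat.factorial n) = (Nat.descFactorial M n : ℝ) := by
    rw [Nat.descFactorial_eq_factorial_mul_choose]
    push_cast
    ring
  rw [hchoose, Nat.descFactorial_eq_prod_range, Nat.cast_prod]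
  have hterm : ∀ i ∈ Finset.range n, ((M - i : ℕ) : ℝ) = ((n:ℝ)+1)*((k'+1:ℕ):ℝ) - 1 - i := by
    intro i hi
    have hiM : i ≤ M := by
      have : i < n := Finset.mem_range.mp hi
      have : n ≤ M := by rw [hMdef, Nat.mul_succ]; omega
      omega
    rw [Nat.cast_sub hiM, hMcast]
  rw [Finset.prod_congr rfl hterm]
  rw [Finset.prod_div_distrib, Finset.prod_const, Finset.card_range]

end J2auxiliary


open BallPaper Filter Topology in
/-- asymptotics of c(𝔹ⁿ,k) (n!/πⁿ)^{2/(n+1)} ∫₀^T [...] du as k → ∞,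
together with the fact that artanh((λ²−1)/(λ²+1)) = ln|λ| for λ² > 1. -/
theorem J2_asymptotics (n : ℕ) (hn : 0 < n) (T : ℝ) (hT0 : 0 < T) (hT1 : T < 1) :
    Tendsto (fun k : ℕ =>
      ((cB n k : ℝ) * ((Nat.factorial n : ℝ) / Real.pi ^ n) ^ ((2 : ℝ) / ((n : ℝ) + 1)) *
          ∫ u in (0 : ℝ)..T,
            (∫ x in (-1 : ℝ)..1,
              (1 - x ^ 2) ^ ((((n : ℝ) + 1) * (k : ℝ)) / 2 - 1) *
                (1 - x * u) ^ (-(((n : ℝ) + 1) * (k : ℝ)))) *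
            (1 - u ^ 2) ^ ((((n : ℝ) + 1) * (k : ℝ)) / 2 - 1)) /
        ((k : ℝ) ^ ((n : ℝ) - 1 / 2) * Real.sqrt 2 * ((n : ℝ) + 1) ^ ((n : ℝ) - 1 / 2) *
          Real.pi ^ (-((3 * (n : ℝ) - 1) / (2 * (n : ℝ) + 2))) *
          (Nat.factorial n : ℝ) ^ (-(((n : ℝ) - 1) / ((n : ℝ) + 1))) * artanh T))
      atTop (𝓝 1) ∧
    ∀ lam : ℝ, 1 < lam ^ 2 → T = (lam ^ 2 - 1) / (lam ^ 2 + 1) →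
      artanh T = Real.log |lam| := by
  constructor
  · -- Part 1: the asymptotics
    have hπ := Real.pi_pos
    have hfacpos : (0:ℝ) < (Nat.factorial n : ℝ) := by
      exact_mod_cast Nat.factorial_pos n
    have hartanh : 0 < artanh T := by
      have h1 : (1:ℝ) < (1+T)/(1-T) := by
        rw [lt_div_iff₀ (by linarith)]; linarith
      have h2 := Real.log_pos h1
      simp only [BallPaper.artanh]
      linarith
    have hA2 : Tendsto (fun k : ℕ => Real.sqrt (((n:ℝ)+1)*(k:ℝ)) *
        Cint ((((n:ℝ)+1)*(k:ℝ))/2 - 1) / Real.sqrt (2*Real.pi)) atTop (𝓝 1) := by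
      have h := (tendsto_sqrtC n hn).div_const (Real.sqrt (2*Real.pi))
      rwa [div_self (ne_of_gt (Real.sqrt_pos.2 (by positivity)))] at h
    have hq3one : ∀ k : ℕ, 1 ≤ k →
        Real.sqrt (2*Real.pi) * ((Nat.factorial n : ℝ) / Real.pi ^ n) ^ ((2:ℝ)/((n:ℝ)+1)) *
          (((n:ℝ)+1)*(k:ℝ))^n /
        ((Nat.factorial n : ℝ) * Real.sqrt (((n:ℝ)+1)*(k:ℝ)) *
          ((k:ℝ) ^ ((n:ℝ) - 1/2) * Real.sqrt 2 * ((n:ℝ)+1) ^ ((n:ℝ) - 1/2) *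
           Real.pi ^ (-((3*(n:ℝ)-1)/(2*(n:ℝ)+2))) *
           (Nat.factorial n : ℝ) ^ (-(((n:ℝ)-1)/((n:ℝ)+1))))) = 1 := by
      intro k hk
      have hk0 : (0:ℝ) < (k:ℝ) := by exact_mod_cast hk
      have hy : (0:ℝ) < (n:ℝ)+1 := by positivity
      have hmk : (0:ℝ) < ((n:ℝ)+1)*(k:ℝ) := by positivity
      have hcancel : (((n:ℝ)+1)*(k:ℝ))^n = Real.sqrt (((n:ℝ)+1)*(k:ℝ)) *
          (((n:ℝ)+1) ^ ((n:ℝ) - 1/2) * (k:ℝ) ^ ((n:ℝ) - 1/2)) := by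
        rw [Real.sqrt_eq_rpow, ← Real.mul_rpow hy.le hk0.le, ← Real.rpow_add hmk,
          ← Real.rpow_natCast (((n:ℝ)+1)*(k:ℝ)) n]
        congr 1
        ring
      have e1 : Real.sqrt (2*Real.pi) = Real.sqrt 2 * Real.pi ^ ((1:ℝ)/2) := by
        rw [Real.sqrt_mul (by norm_num : (0:ℝ) ≤ 2), Real.sqrt_eq_rpow Real.pi]
      have e2 : ((Nat.factorial n : ℝ)/Real.pi^n) ^ ((2:ℝ)/((n:ℝ)+1)) =
          (Nat.factorial n : ℝ) ^ ((2:ℝ)/((n:ℝ)+1)) /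
            Real.pi ^ ((n:ℝ)*((2:ℝ)/((n:ℝ)+1))) := by
        rw [Real.div_rpow (by positivity) (by positivity), ← Real.rpow_natCast Real.pi n,
          ← Real.rpow_mul Real.pi_pos.le]
      have e3 : Real.pi ^ (-((3*(n:ℝ)-1)/(2*(n:ℝ)+2))) =
          Real.pi ^ ((1:ℝ)/2) / Real.pi ^ ((n:ℝ)*((2:ℝ)/((n:ℝ)+1))) := by
        rw [← Real.rpow_sub Real.pi_pos]
        congr 1
        have hne : (n:ℝ)+1 ≠ 0 := by positivity
        field_simp
        ring
      have e4 : (Nat.factorial n : ℝ) * (Nat.factorial n : ℝ) ^ (-(((n:ℝ)-1)/((n:ℝ)+1))) =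
          (Nat.factorial n : ℝ) ^ ((2:ℝ)/((n:ℝ)+1)) := by
        nth_rewrite 1 [← Real.rpow_one (Nat.factorial n : ℝ)]
        rw [← Real.rpow_add hfacpos]
        congr 1
        have hne : (n:ℝ)+1 ≠ 0 := by positivity
        field_simp
        ring
      have hconst : Real.sqrt (2*Real.pi) *
          ((Nat.factorial n : ℝ) / Real.pi ^ n) ^ ((2:ℝ)/((n:ℝ)+1)) =
          (Nat.factorial n : ℝ) * Real.sqrt 2 *
            Real.pi ^ (-((3*(n:ℝ)-1)/(2*(n:ℝ)+2))) *
            (Nat.factorial n : ℝ) ^ (-(((n:ℝ)-1)/((n:ℝ)+1))) := by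
        rw [e1, e2, e3]
        linear_combination (-(Real.sqrt 2 * Real.pi ^ ((1:ℝ)/2) /
          Real.pi ^ ((n:ℝ)*((2:ℝ)/((n:ℝ)+1))))) * e4
      have hDpos : (0:ℝ) < (Nat.factorial n : ℝ) * Real.sqrt (((n:ℝ)+1)*(k:ℝ)) *
          ((k:ℝ) ^ ((n:ℝ) - 1/2) * Real.sqrt 2 * ((n:ℝ)+1) ^ ((n:ℝ) - 1/2) *
           Real.pi ^ (-((3*(n:ℝ)-1)/(2*(n:ℝ)+2))) *
           (Nat.factorial n : ℝ) ^ (-(((n:ℝ)-1)/((n:ℝ)+1)))) := by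
        apply mul_pos (mul_pos hfacpos (Real.sqrt_pos.2 hmk))
        exact mul_pos (mul_pos (mul_pos (mul_pos (Real.rpow_pos_of_pos hk0 _)
          (Real.sqrt_pos.2 two_pos)) (Real.rpow_pos_of_pos hy _))
          (Real.rpow_pos_of_pos hπ _)) (Real.rpow_pos_of_pos hfacpos _)
      rw [div_eq_one_iff_eq (ne_of_gt hDpos), hconst, hcancel]
      ring
    have hq3t : Tendsto (fun k : ℕ =>
        Real.sqrt (2*Real.pi) * ((Nat.factorial n : ℝ) / Real.pi ^ n) ^ ((2:ℝ)/((n:ℝ)+1)) *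
          (((n:ℝ)+1)*(k:ℝ))^n /
        ((Nat.factorial n : ℝ) * Real.sqrt (((n:ℝ)+1)*(k:ℝ)) *
          ((k:ℝ) ^ ((n:ℝ) - 1/2) * Real.sqrt 2 * ((n:ℝ)+1) ^ ((n:ℝ) - 1/2) *
           Real.pi ^ (-((3*(n:ℝ)-1)/(2*(n:ℝ)+2))) *
           (Nat.factorial n : ℝ) ^ (-(((n:ℝ)-1)/((n:ℝ)+1)))))) atTop (𝓝 1) := by
      apply Tendsto.congr' _ tendsto_const_nhds
      filter_upwards [eventually_ge_atTop 1] with k hk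
      exact (hq3one k hk).symm
    have hprod := ((cB_tendsto n hn).mul hA2).mul hq3t
    rw [show (1:ℝ)*1*1 = 1 by norm_num] at hprod
    apply hprod.congr'
    filter_upwards [eventually_ge_atTop 1] with k hk
    have h1k : (1:ℝ) ≤ (k:ℝ) := by exact_mod_cast hk
    have h1n : (1:ℝ) ≤ (n:ℝ) := by exact_mod_cast hn
    have hm2 : (2:ℝ) ≤ ((n:ℝ)+1)*(k:ℝ) := by nlinarith
    rw [outer_integral hm2 hT0 hT1]
    have hk0 : (0:ℝ) < (k:ℝ) := by linarith
    have hy : (0:ℝ) < (n:ℝ)+1 := by positivity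
    have hmk : (0:ℝ) < ((n:ℝ)+1)*(k:ℝ) := by positivity
    have hCpos : 0 < Cint ((((n:ℝ)+1)*(k:ℝ))/2 - 1) := Cint_pos (by linarith)
    have hne1 : Real.sqrt (((n:ℝ)+1)*(k:ℝ)) ≠ 0 := ne_of_gt (Real.sqrt_pos.2 hmk)
    have hne2 : Real.sqrt (2*Real.pi) ≠ 0 := ne_of_gt (Real.sqrt_pos.2 (by positivity))
    have hne3 : Real.sqrt 2 ≠ 0 := ne_of_gt (Real.sqrt_pos.2 two_pos)
    have hne4 : (((n:ℝ)+1)*(k:ℝ))^n ≠ 0 := pow_ne_zero _ (ne_of_gt hmk)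
    have hne5 : (k:ℝ) ^ ((n:ℝ) - 1/2) ≠ 0 := ne_of_gt (Real.rpow_pos_of_pos hk0 _)
    have hne6 : ((n:ℝ)+1) ^ ((n:ℝ) - 1/2) ≠ 0 := ne_of_gt (Real.rpow_pos_of_pos hy _)
    have hne7 : Real.pi ^ (-((3*(n:ℝ)-1)/(2*(n:ℝ)+2))) ≠ 0 :=
      ne_of_gt (Real.rpow_pos_of_pos hπ _)
    have hne8 : (Nat.factorial n : ℝ) ^ (-(((n:ℝ)-1)/((n:ℝ)+1))) ≠ 0 :=
      ne_of_gt (Real.rpow_pos_of_pos hfacpos _)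
    have hne9 : artanh T ≠ 0 := ne_of_gt hartanh
    have hne10 : (Nat.factorial n : ℝ) ≠ 0 := ne_of_gt hfacpos
    field_simp
  · -- Part 2: artanh((λ²-1)/(λ²+1)) = log |λ|
    intro lam hlam hT
    have hl0 : lam ≠ 0 := by
      intro h; rw [h] at hlam; norm_num at hlam
    have hl1 : (0:ℝ) < lam^2 + 1 := by positivity
    have h1T : 1 + T = 2*lam^2/(lam^2+1) := by
      rw [hT]; field_simp; ring
    have h2T : 1 - T = 2/(lam^2+1) := by
      rw [hT]; field_simp; ring
    simp only [BallPaper.artanh]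
    rw [h1T, h2T]
    have hrat : 2*lam^2/(lam^2+1) / (2/(lam^2+1)) = lam^2 := by
      field_simp
    rw [hrat, Real.log_pow, Real.log_abs]
    push_cast
    ring
end
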